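/- arXiv:2407.07500 — 11 statements merged into one kernel-verified Lean document; each statement's English description precedes it below -/
import Mathlib

section
/- Let k ≥ 2 be an integer, let G be a finite simple graph on a vertex set V, and let u, v be non-adjacent vertices of G that are clear non-neighbors with respect to k. Then for every simple graph G' on V with S_k(G') = S_k(G), the pair uv is not an edge of G'. -/
open SimpleGraph

lemma exists_pred {α : Type*} (H : SimpleGraph α) {u x : α} (h : H.dist u x ≠ 0) :
    ∃ y, H.Adj y x ∧ H.dist u y + 1 = H.dist u x := by
  obtain ⟨p, hp⟩ := H.exists_walk_of_dist_ne_zero h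
  cases hq : p.reverse with
  | nil => simp [SimpleGraph.dist_self] at h
  | @cons _ y _ ha r =>
      refine ⟨y, ha.symm, ?_⟩
      have hlen : r.length + 1 = H.dist u x := by
        have := congrArg SimpleGraph.Walk.length hq
        simpa [hp] using this.symm
      have h1 : H.dist u y ≤ r.length := by
        simpa using SimpleGraph.dist_le r.reverse
      obtain ⟨q, hqlen⟩ := (r.reverse.reachable).exists_walk_length_eq_dist
      have h3 : H.dist u x ≤ H.dist u y + 1 := by
        simpa [hqlen] using SimpleGraph.dist_le (q.concat ha.symm)
      omega

lemma key {V : Type*} [Fintype V] [DecidableEq V] (H : SimpleGraph V) (T : Finset V)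
    {u v : V} (hu : u ∈ T) (hv : v ∈ T) (huv : H.Adj u v)
    (hc : (H.induce (T : Set V)).Connected) (h3 : 3 ≤ T.card) :
    ∃ w ∈ T, w ≠ u ∧ w ≠ v ∧ (H.induce ((T.erase w : Finset V) : Set V)).Connected := by
  classical
  set I := H.induce (T : Set V) with hI
  have huT : u ∈ (T : Set V) := by simpa using hu
  have hvT : v ∈ (T : Set V) := by simpa using hv
  set U : (T : Set V) := ⟨u, huT⟩ with hU
  have hune : u ≠ v := huv.ne
  -- pick `W` maximizing distance from `U` among vertices ≠ u, v
  set s : Finset (T : Set V) :=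
    Finset.univ.filter (fun x : (T : Set V) => (x : V) ≠ u ∧ (x : V) ≠ v) with hs
  have hsne : s.Nonempty := by
    have hcard : 0 < ((T.erase v).erase u).card := by
      have h1 := Finset.card_erase_of_mem (Finset.mem_erase.mpr ⟨hune, hu⟩)
      have h2 := Finset.card_erase_of_mem hv
      omega
    obtain ⟨x0, hx0⟩ := Finset.card_pos.mp hcard
    simp only [Finset.mem_erase] at hx0
    exact ⟨⟨x0, by simpa using hx0.2.2⟩, by simp [hs, hx0.1, hx0.2.1]⟩
  obtain ⟨W, hWs, hWmax⟩ := Finset.exists_max_image s (fun x => I.dist U x) hsne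
  simp only [hs, Finset.mem_filter, Finset.mem_univ, true_and] at hWs
  obtain ⟨hwu, hwv⟩ := hWs
  have hWmax' : ∀ x : (T : Set V), (x : V) ≠ u → (x : V) ≠ v → I.dist U x ≤ I.dist U W := by
    intro x h1 h2
    exact hWmax x (by simp [hs, h1, h2])
  set w : V := (W : V) with hw
  have hwT : w ∈ T := Finset.mem_coe.mp W.2
  refine ⟨w, hwT, hwu, hwv, ?_⟩
  have humem : u ∈ ((T.erase w : Finset V) : Set V) := by
    simp [Finset.mem_erase, hu, Ne.symm hwu]
  have hmem : ∀ {x : V}, x ∈ (T : Set V) → x ≠ w → x ∈ ((T.erase w : Finset V) : Set V) := by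
    intro x hx hxw
    simp only [Finset.coe_erase, Set.mem_diff, Set.mem_singleton_iff]
    exact ⟨hx, hxw⟩
  -- main claim by strong induction on distance
  have main : ∀ n : ℕ, ∀ x, ∀ hx : x ∈ (T : Set V), ∀ hxw : x ≠ w,
      I.dist U ⟨x, hx⟩ ≤ n →
      (H.induce ((T.erase w : Finset V) : Set V)).Reachable
        ⟨u, humem⟩ ⟨x, hmem hx hxw⟩ := by
    intro n
    induction n with
    | zero =>
        intro x hx hxw hdist
        have h0 : I.dist U ⟨x, hx⟩ = 0 := Nat.le_zero.mp hdist
        have hxu : x = u :=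
          (congrArg Subtype.val ((hc.dist_eq_zero_iff).mp h0)).symm
        subst hxu
        exact Reachable.refl _
    | succ n ih =>
        intro x hx hxw hdist
        by_cases hxu : x = u
        · subst hxu; exact Reachable.refl _
        by_cases hxv : x = v
        · subst hxv
          refine SimpleGraph.Adj.reachable ?_
          simpa using huv
        have hxd0 : I.dist U ⟨x, hx⟩ ≠ 0 := by
          intro h0
          exact hxu (congrArg Subtype.val ((hc.dist_eq_zero_iff).mp h0)).symm
        obtain ⟨⟨y, hy⟩, hadj, hdy⟩ := exists_pred I hxd0
        have hdxw : I.dist U ⟨x, hx⟩ ≤ I.dist U W := hWmax' ⟨x, hx⟩ hxu hxv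
        have hyw : y ≠ w := by
          intro h
          have hWeq : (⟨y, hy⟩ : (T : Set V)) = W := Subtype.ext h
          rw [hWeq] at hdy
          omega
        have hreach := ih y hy hyw (by omega)
        refine hreach.trans (SimpleGraph.Adj.reachable ?_)
        simpa [hI] using hadj
  apply SimpleGraph.induce_connected_of_patches u humem
  intro x hx
  have hxT : x ∈ (T : Set V) := by
    simp only [Finset.coe_erase, Set.mem_diff] at hx; exact hx.1
  have hxw : x ≠ w := by
    simp only [Finset.coe_erase, Set.mem_diff, Set.mem_singleton_iff] at hx; exact hx.2
  exact ⟨_, subset_refl _, humem, hx, main (I.dist U ⟨x, hxT⟩) x hxT hxw le_rfl⟩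


/-- `connSets k G` is the family of `k`-element subsets of the vertex set that
induce a connected subgraph of `G` (denoted `S_k(G)` in the paper). -/
def connSets {V : Type*} (k : ℕ) (G : SimpleGraph V) : Set (Finset V) :=
  {S | S.card = k ∧ (G.induce (S : Set V)).Connected}

/-- One direction of the "clear non-neighbors" condition: there is a connected
`k`-set `S` with `v ∈ S`, `u ∉ S`, such that for every `v' ∈ S \ {v}` the set
`(S \ {v'}) ∪ {u}` induces a disconnected subgraph of `G`. -/
def OneSideClear {V : Type*} [DecidableEq V] (k : ℕ) (G : SimpleGraph V) (u v : V) : Prop :=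
  ∃ S : Finset V, S.card = k ∧ (G.induce (S : Set V)).Connected ∧ v ∈ S ∧ u ∉ S ∧
    ∀ v' ∈ S.erase v,
      ¬ (G.induce ((insert u (S.erase v') : Finset V) : Set V)).Connected

/-- Two (non-adjacent) vertices `u`, `v` are clear non-neighbors with respect to `k`. -/
def ClearNonNeighbors {V : Type*} [DecidableEq V] (k : ℕ) (G : SimpleGraph V) (u v : V) : Prop :=
  OneSideClear k G u v ∨ OneSideClear k G v u

lemma oneside_false {V : Type*} [Fintype V] [DecidableEq V] (k : ℕ) (hk : 2 ≤ k)
    (G : SimpleGraph V) (u v : V) (h : OneSideClear k G u v)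
    (G' : SimpleGraph V) (hSk : connSets k G' = connSets k G) (hadj : G'.Adj u v) : False := by
  obtain ⟨S, hScard, hSconn, hvS, huS, hfar⟩ := h
  -- S is G'-connected
  have hS' : S ∈ connSets k G' := by rw [hSk]; exact ⟨hScard, hSconn⟩
  -- T = insert u S is G'-connected
  set T : Finset V := insert u S with hT
  have hTset : (T : Set V) = (S : Set V) ∪ {v, u} := by
    ext x
    simp only [hT, Finset.coe_insert, Set.mem_insert_iff, Finset.mem_coe,
      Set.mem_union, Set.mem_insert_iff, Set.mem_singleton_iff]
    constructor
    · rintro (rfl | hx)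
      · right; right; rfl
      · left; exact hx
    · rintro (hx | rfl | rfl)
      · right; exact hx
      · right; exact hvS
      · left; rfl
  have hTconn : (G'.induce (T : Set V)).Connected := by
    rw [hTset]
    exact SimpleGraph.connected_induce_union hS'.2.preconnected
      (SimpleGraph.induce_pair_connected_of_adj hadj.symm).preconnected
      (Finset.mem_coe.mpr hvS) (by simp) hadj.symm
  have hTcard : T.card = k + 1 := by
    rw [hT, Finset.card_insert_of_notMem huS, hScard]
  have hvT : v ∈ T := Finset.mem_insert_of_mem hvS
  have huT : u ∈ T := Finset.mem_insert_self u S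
  obtain ⟨w, hwT, hwu, hwv, hwconn⟩ :=
    key G' T huT hvT hadj hTconn (by omega)
  have hwS : w ∈ S := by
    rcases Finset.mem_insert.mp hwT with h | h
    · exact absurd h hwu
    · exact h
  have herase : T.erase w = insert u (S.erase w) := by
    ext x
    simp only [Finset.mem_erase, hT, Finset.mem_insert]
    constructor
    · rintro ⟨hxw, rfl | hx⟩
      · exact Or.inl rfl
      · exact Or.inr ⟨hxw, hx⟩
    · rintro (rfl | ⟨h1, h2⟩)
      · exact ⟨hwu.symm, Or.inl rfl⟩
      · exact ⟨h1, Or.inr h2⟩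
  have hcard' : (insert u (S.erase w)).card = k := by
    rw [Finset.card_insert_of_notMem (fun h => huS (Finset.mem_of_mem_erase h)),
      Finset.card_erase_of_mem hwS, hScard]
    omega
  have hmem : insert u (S.erase w) ∈ connSets k G' := by
    refine ⟨hcard', ?_⟩
    rw [← herase]
    exact hwconn
  rw [hSk] at hmem
  exact hfar w (Finset.mem_erase.mpr ⟨hwv, hwS⟩) hmem.2

theorem stmt1 {V : Type*} [Fintype V] [DecidableEq V] (k : ℕ) (hk : 2 ≤ k)
    (G : SimpleGraph V) (u v : V) (hnadj : ¬ G.Adj u v)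
    (hclear : ClearNonNeighbors k G u v)
    (G' : SimpleGraph V) (hSk : connSets k G' = connSets k G) :
    ¬ G'.Adj u v := by
  intro hadj
  rcases hclear with h | h
  · exact oneside_false k hk G u v h G' hSk hadj
  · exact oneside_false k hk G v u h G' hSk hadj.symm
end

section
/- Let k ≥ 2 be an integer, let G be a finite simple graph on a vertex set V, let u ∈ V, and let W ⊆ V with u ∈ W be such that u has no neighbor of G inside W, the induced subgraph G[W \ {u}] is connected, and |W \ {u}| ≥ k. Then for every v ∈ W \ {u}, the vertices u and v are non-adjacent in G and are clear non-neighbors with respect to k. -/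
lemma singleton_induce_connected {V : Type*} (G : SimpleGraph V) (v : V) :
    (G.induce ({v} : Set V)).Connected := by
  rw [SimpleGraph.connected_iff_exists_forall_reachable]
  refine ⟨⟨v, rfl⟩, ?_⟩
  rintro ⟨a, ha⟩
  have : a = v := ha
  subst this
  exact SimpleGraph.Reachable.refl _

/-- Extension lemma: inside a connected set `T`, any vertex lies in a connected
subset of any size `n` with `1 ≤ n ≤ T.ncard`. -/
lemma exists_connected_subset {V : Type*} [Fintype V] [DecidableEq V]
    (G : SimpleGraph V) (T : Set V) (hT : (G.induce T).Connected)
    (v : V) (hv : v ∈ T) :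
    ∀ n : ℕ, 1 ≤ n → n ≤ T.ncard →
      ∃ S : Finset V, ↑S ⊆ T ∧ v ∈ S ∧ S.card = n ∧ (G.induce (S : Set V)).Connected := by
  intro n
  induction n with
  | zero => omega
  | succ n ih =>
    intro _ hle
    rcases Nat.eq_or_lt_of_le (Nat.one_le_iff_ne_zero.mpr (by omega) : 1 ≤ n + 1) with h1 | h1
    · exact ⟨{v}, by simpa using hv, by simp, by simp [← h1],
        by rw [Finset.coe_singleton]; exact singleton_induce_connected G v⟩
    · obtain ⟨S, hST, hvS, hcard, hSconn⟩ := ih (by omega) (by omega)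
      -- find a vertex of T outside S
      have hTfin : T.Finite := Set.toFinite T
      have hssub : ¬ T ⊆ (S : Set V) := by
        intro h
        have : T.ncard ≤ S.card := by
          have := Set.ncard_le_ncard h (Set.toFinite _)
          simpa using this
        omega
      obtain ⟨w, hwT, hwS⟩ := Set.not_subset.mp hssub
      -- walk in induce T from v to w
      obtain ⟨p⟩ := hT.preconnected ⟨v, hv⟩ ⟨w, hwT⟩
      obtain ⟨d, _, hd1, hd2⟩ := p.exists_boundary_dart {x : T | (x : V) ∈ S}
        (by simpa using hvS) (by simpa using hwS)
      set a : V := (d.fst : V)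
      set b : V := (d.snd : V)
      have hab : G.Adj a b := d.adj
      have haS : a ∈ S := hd1
      have hbS : b ∉ S := hd2
      refine ⟨insert b S, ?_, Finset.mem_insert_of_mem hvS, ?_, ?_⟩
      · intro x hx
        rcases Finset.mem_insert.mp (by exact_mod_cast hx) with h | h
        · exact h ▸ d.snd.2
        · exact hST h
      · rw [Finset.card_insert_of_notMem hbS, hcard]
      · have : (G.induce (({b} : Set V) ∪ (S : Set V))).Connected :=
          SimpleGraph.connected_induce_union (singleton_induce_connected G b).preconnected hSconn.preconnected
            rfl haS hab.symm
        have hset : ((insert b S : Finset V) : Set V) = ({b} : Set V) ∪ (S : Set V) := by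
          rw [Finset.coe_insert, Set.insert_eq]
        rw [hset]
        exact this

theorem stmt2 {V : Type*} [Fintype V] [DecidableEq V] (k : ℕ) (hk : 2 ≤ k)
    (G : SimpleGraph V) (u : V) (W : Set V) (huW : u ∈ W)
    (hnoadj : ∀ w ∈ W, ¬ G.Adj u w)
    (hconn : (G.induce (W \ {u})).Connected)
    (hcard : k ≤ (W \ {u} : Set V).ncard) :
    ∀ v ∈ W \ ({u} : Set V), ¬ G.Adj u v ∧ ClearNonNeighbors k G u v := by
  intro v hv
  have hvW : v ∈ W := hv.1
  refine ⟨hnoadj v hvW, ?_⟩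
  left
  obtain ⟨S, hST, hvS, hcardS, hSconn⟩ :=
    exists_connected_subset G (W \ {u}) hconn v hv k (by omega) hcard
  have huS : u ∉ S := fun h => (hST h).2 rfl
  refine ⟨S, hcardS, hSconn, hvS, huS, ?_⟩
  intro v' hv' hconn'
  -- the set insert u (S.erase v') contains some vertex other than u
  have huE : u ∉ S.erase v' := fun h => huS (Finset.mem_of_mem_erase h)
  have hcard2 : (insert u (S.erase v')).card = k := by
    rw [Finset.card_insert_of_notMem huE, Finset.card_erase_of_mem (Finset.mem_of_mem_erase hv'),
      hcardS]
    omega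
  have : ∃ x ∈ insert u (S.erase v'), x ≠ u := by
    by_contra h
    push_neg at h
    have : insert u (S.erase v') ⊆ {u} := fun x hx => by simp [h x hx]
    have := Finset.card_le_card this
    simp [hcard2] at this
    omega
  obtain ⟨x, hx, hxu⟩ := this
  -- u is isolated in W, contradiction with connectedness
  obtain ⟨p⟩ := hconn'.preconnected ⟨u, by simp⟩ ⟨x, Finset.mem_coe.mpr hx⟩
  cases p with
  | nil => exact hxu rfl
  | @cons _ b _ h q =>
    have hadj : G.Adj u (b : V) := h
    have hbW : (b : V) ∈ W := by
      have hb := b.2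
      simp only [Finset.coe_insert, Set.mem_insert_iff, Finset.mem_coe] at hb
      rcases hb with h' | h'
      · rw [h']; exact huW
      · exact (hST (Finset.mem_of_mem_erase h')).1
    exact hnoadj _ hbW hadj
end

section
/- Let k ≥ 2 be an integer and let G be a finite simple graph on a vertex set V. Let u, v be non-adjacent vertices of G that are fake neighbors with respect to k. Let C_u be the connected component containing u of the subgraph of G induced on V \ N_G(v), and let C_v be the connected component containing v of the subgraph of G induced on V \ N_G(u). If |V(C_u) ∪ V(C_v)| ≤ k − 1, then the graph G + uv obtained from G by adding the edge uv satisfies S_k(G + uv) = S_k(G); in particular, G is not the unique graph with its family of connected k-sets. -/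
/-- The vertex set of the connected component containing `u` of the subgraph of `G`
induced on the set `A` (empty if `u ∉ A`). -/
def compSet {V : Type*} (G : SimpleGraph V) (A : Set V) (u : V) : Set V :=
  {x | ∃ (hu : u ∈ A) (hx : x ∈ A), (G.induce A).Reachable ⟨u, hu⟩ ⟨x, hx⟩}

private lemma walk_closed {W : Type*} {H : SimpleGraph W} {R : Set W}
    (hclosed : ∀ x y, H.Adj x y → x ∈ R → y ∈ R) :
    ∀ {a b : W}, H.Walk a b → a ∈ R → b ∈ R := by
  intro a b w
  induction w with
  | nil => exact id
  | cons h p ih => exact fun ha => ih (hclosed _ _ h ha)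

private lemma walk_restrict {V : Type*} (G : SimpleGraph V) (Sset R : Set V)
    (hclosed : ∀ x y, x ∈ Sset → y ∈ Sset → G.Adj x y → x ∈ R → y ∈ R) :
    ∀ {a b : ↥Sset} (_ : (G.induce Sset).Walk a b) (ha : (a : V) ∈ R),
      ∃ hb : (b : V) ∈ R, (G.induce R).Reachable ⟨(a : V), ha⟩ ⟨(b : V), hb⟩ := by
  intro a b w
  induction w with
  | nil => exact fun ha => ⟨ha, SimpleGraph.Reachable.refl _⟩
  | @cons x y z h p ih =>
    intro ha
    have hadj : G.Adj (x : V) (y : V) := h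
    have hy : (y : V) ∈ R := hclosed _ _ x.2 y.2 hadj ha
    obtain ⟨hb, hr⟩ := ih hy
    exact ⟨hb, SimpleGraph.Reachable.trans
      (SimpleGraph.Adj.reachable
        (show (G.induce R).Adj ⟨(x : V), ha⟩ ⟨(y : V), hy⟩ from hadj)) hr⟩

private lemma reach_mono {V : Type*} (G : SimpleGraph V) {A B : Set V} (hAB : A ⊆ B)
    {x y : V} (hx : x ∈ A) (hy : y ∈ A)
    (h : (G.induce A).Reachable ⟨x, hx⟩ ⟨y, hy⟩) :
    (G.induce B).Reachable ⟨x, hAB hx⟩ ⟨y, hAB hy⟩ := by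
  exact h.map (⟨fun a => ⟨a.1, hAB a.2⟩, fun h => h⟩ : G.induce A →g G.induce B)

theorem stmt4 {V : Type*} [Fintype V] [DecidableEq V] (k : ℕ) (hk : 2 ≤ k)
    (G : SimpleGraph V) (u v : V) (huv : u ≠ v) (hnadj : ¬ G.Adj u v)
    (hfake : ¬ ClearNonNeighbors k G u v)
    (hsmall : (compSet G {x | x ∉ G.neighborSet v} u ∪
               compSet G {x | x ∉ G.neighborSet u} v).ncard ≤ k - 1) :
    connSets k (G ⊔ SimpleGraph.fromEdgeSet {s(u, v)}) = connSets k G ∧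
    G ⊔ SimpleGraph.fromEdgeSet {s(u, v)} ≠ G := by
  set G' := G ⊔ SimpleGraph.fromEdgeSet {s(u, v)} with hG'
  have hG'adj : ∀ a b : V, G'.Adj a b ↔ G.Adj a b ∨ ((a = u ∧ b = v) ∨ (a = v ∧ b = u)) := by
    intro a b
    rw [hG', SimpleGraph.sup_adj, SimpleGraph.fromEdgeSet_adj]
    constructor
    · rintro (h | ⟨h, hne⟩)
      · exact Or.inl h
      · simp only [Set.mem_singleton_iff, Sym2.eq, Sym2.rel_iff', Prod.mk.injEq,
          Prod.swap_prod_mk] at h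
        exact Or.inr h
    · rintro (h | (⟨rfl, rfl⟩ | ⟨rfl, rfl⟩))
      · exact Or.inl h
      · exact Or.inr ⟨by simp, huv⟩
      · exact Or.inr ⟨by simp [Sym2.eq_swap], huv.symm⟩
  refine ⟨?_, ?_⟩
  · ext S
    simp only [connSets, Set.mem_setOf_eq]
    constructor
    · rintro ⟨hcard, hconn⟩
      refine ⟨hcard, ?_⟩
      by_cases hmem : u ∈ S ∧ v ∈ S
      · -- hard case
        obtain ⟨huS, hvS⟩ := hmem
        have hu' : u ∈ (S : Set V) := huS
        have hv' : v ∈ (S : Set V) := hvS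
        by_contra hcon
        set Sset : Set V := (S : Set V) with hSset
        set Ru : Set V := {x | ∃ hx : x ∈ Sset, (G.induce Sset).Reachable ⟨u, hu'⟩ ⟨x, hx⟩}
          with hRu
        set Rv : Set V := {x | ∃ hx : x ∈ Sset, (G.induce Sset).Reachable ⟨v, hv'⟩ ⟨x, hx⟩}
          with hRv
        have hall0 : ∀ x : ↥Sset, (x : V) ∈ Ru ∪ Rv := by
          intro x
          have hreach : (G'.induce Sset).Reachable ⟨u, hu'⟩ x := hconn.preconnected _ _
          obtain ⟨w⟩ := hreach
          refine walk_closed (R := {y : ↥Sset | (y : V) ∈ Ru ∪ Rv}) ?_ w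
            (Or.inl ⟨hu', SimpleGraph.Reachable.refl _⟩)
          intro a b hab hmema
          have hab' : G'.Adj (a : V) (b : V) := hab
          rw [hG'adj] at hab'
          rcases hab' with h | (⟨hau, hbv⟩ | ⟨hav, hbu⟩)
          · have hadj : (G.induce Sset).Adj a b := h
            rcases hmema with ⟨ha, hr⟩ | ⟨ha, hr⟩
            · refine Or.inl ⟨b.2, ?_⟩
              have : (⟨(a : V), ha⟩ : ↥Sset) = a := rfl
              exact (this ▸ hr).trans hadj.reachable
            · refine Or.inr ⟨b.2, ?_⟩
              have : (⟨(a : V), ha⟩ : ↥Sset) = a := rfl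
              exact (this ▸ hr).trans hadj.reachable
          · refine Or.inr ⟨b.2, ?_⟩
            have hbe : (⟨(b : V), b.2⟩ : ↥Sset) = ⟨v, hv'⟩ := Subtype.ext hbv
            rw [hbe]
          · refine Or.inl ⟨b.2, ?_⟩
            have hbe : (⟨(b : V), b.2⟩ : ↥Sset) = ⟨u, hu'⟩ := Subtype.ext hbu
            rw [hbe]
        have key : ∀ a : ↥Sset, (G.induce Sset).Reachable ⟨u, hu'⟩ a ∨
            (G.induce Sset).Reachable ⟨v, hv'⟩ a := by
          intro a
          rcases hall0 a with ⟨ha, hr⟩ | ⟨ha, hr⟩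
          · exact Or.inl ((show (⟨(a : V), ha⟩ : ↥Sset) = a from rfl) ▸ hr)
          · exact Or.inr ((show (⟨(a : V), ha⟩ : ↥Sset) = a from rfl) ▸ hr)
        have hnr : ¬ (G.induce Sset).Reachable ⟨u, hu'⟩ ⟨v, hv'⟩ := by
          intro hr
          apply hcon
          haveI : Nonempty ↥Sset := ⟨⟨u, hu'⟩⟩
          refine SimpleGraph.Connected.mk fun a b => ?_
          have ha := key a
          have hb := key b
          rcases ha with ha | ha <;> rcases hb with hb | hb
          · exact ha.symm.trans hb
          · exact ha.symm.trans (hr.trans hb)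
          · exact ha.symm.trans (hr.symm.trans hb)
          · exact ha.symm.trans hb
        -- S is contained in the union of the two components
        have hsub : Sset ⊆ compSet G {x | x ∉ G.neighborSet v} u ∪
            compSet G {x | x ∉ G.neighborSet u} v := by
          intro x hx
          rcases key ⟨x, hx⟩ with hr | hr
          · left
            have hRuN : Ru ⊆ {y | y ∉ G.neighborSet v} := by
              rintro y ⟨hyS, hyr⟩ hyN
              exact hnr (hyr.trans (SimpleGraph.Adj.reachable
                (show (G.induce Sset).Adj ⟨y, hyS⟩ ⟨v, hv'⟩ from
                  ((G.mem_neighborSet _ _).mp hyN).symm)))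
            have hclosedRu : ∀ a b, a ∈ Sset → b ∈ Sset → G.Adj a b → a ∈ Ru → b ∈ Ru := by
              rintro a b haS hbS hab ⟨haS', har⟩
              exact ⟨hbS, har.trans (SimpleGraph.Adj.reachable
                (show (G.induce Sset).Adj ⟨a, haS'⟩ ⟨b, hbS⟩ from hab))⟩
            obtain ⟨w⟩ := hr
            have huRu : u ∈ Ru := ⟨hu', SimpleGraph.Reachable.refl _⟩
            obtain ⟨hxRu, hreach⟩ := walk_restrict G Sset Ru hclosedRu w huRu
            exact ⟨hRuN huRu, hRuN hxRu, reach_mono G hRuN huRu hxRu hreach⟩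
          · right
            have hRvN : Rv ⊆ {y | y ∉ G.neighborSet u} := by
              rintro y ⟨hyS, hyr⟩ hyN
              exact hnr ((hyr.trans (SimpleGraph.Adj.reachable
                (show (G.induce Sset).Adj ⟨y, hyS⟩ ⟨u, hu'⟩ from
                  ((G.mem_neighborSet _ _).mp hyN).symm))).symm)
            have hclosedRv : ∀ a b, a ∈ Sset → b ∈ Sset → G.Adj a b → a ∈ Rv → b ∈ Rv := by
              rintro a b haS hbS hab ⟨haS', har⟩
              exact ⟨hbS, har.trans (SimpleGraph.Adj.reachable
                (show (G.induce Sset).Adj ⟨a, haS'⟩ ⟨b, hbS⟩ from hab))⟩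
            obtain ⟨w⟩ := hr
            have hvRv : v ∈ Rv := ⟨hv', SimpleGraph.Reachable.refl _⟩
            obtain ⟨hxRv, hreach⟩ := walk_restrict G Sset Rv hclosedRv w hvRv
            exact ⟨hRvN hvRv, hRvN hxRv, reach_mono G hRvN hvRv hxRv hreach⟩
        have hle : k ≤ k - 1 := by
          calc k = Sset.ncard := by rw [hSset, Set.ncard_coe_finset, hcard]
            _ ≤ _ := Set.ncard_le_ncard hsub (Set.toFinite _)
            _ ≤ k - 1 := hsmall
        omega
      · -- easy case: the two induced graphs coincide on S
        have heq : G'.induce ((S : Finset V) : Set V) = G.induce ((S : Finset V) : Set V) := by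
          ext a b
          rw [SimpleGraph.comap_adj, SimpleGraph.comap_adj, hG'adj]
          constructor
          · rintro (h | (⟨hau, hbv⟩ | ⟨hav, hbu⟩))
            · exact h
            · exact absurd ⟨hau ▸ a.2, hbv ▸ b.2⟩ hmem
            · exact absurd ⟨hbu ▸ b.2, hav ▸ a.2⟩ hmem
          · exact fun h => Or.inl h
        rw [heq] at hconn
        exact hconn
    · rintro ⟨hcard, hconn⟩
      refine ⟨hcard, hconn.mono ?_⟩
      intro a b hab
      exact Or.inl hab
  · intro h
    have : G'.Adj u v := by rw [hG'adj]; exact Or.inr (Or.inl ⟨rfl, rfl⟩)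
    rw [h] at this
    exact hnadj this
end

section
/- Let k ≥ 3 and r ≥ 3k − 6 be integers. Let K be the star K_{1,r} on a vertex set V: a graph with a center vertex v adjacent to all r other vertices of V and with no other edges. If G is a triangle-free simple graph on V with S_k(G) = S_k(K), then G = K. -/
open Finset

private lemma star_conn {V : Type*} (G : SimpleGraph V) (S : Finset V) (c : V)
    (hc : c ∈ S) (h : ∀ x ∈ S, x ≠ c → G.Adj c x) :
    (G.induce (S : Set V)).Connected := by
  rw [SimpleGraph.connected_iff]
  refine ⟨?_, ⟨⟨c, hc⟩⟩⟩
  have hreach : ∀ x : (S : Set V), (G.induce (S : Set V)).Reachable ⟨c, hc⟩ x := by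
    rintro ⟨x, hx⟩
    by_cases hxc : x = c
    · subst hxc; exact SimpleGraph.Reachable.refl _
    · exact SimpleGraph.Adj.reachable (by exact h x (by simpa using hx) hxc)
  intro a b
  exact (hreach a).symm.trans (hreach b)

private lemma not_conn_isolated {V : Type*} (G : SimpleGraph V) (S : Finset V)
    (x y : V) (hx : x ∈ S) (hy : y ∈ S) (hxy : x ≠ y)
    (h : ∀ z ∈ S, ¬ G.Adj x z) :
    ¬ (G.induce (S : Set V)).Connected := by
  intro hc
  obtain ⟨w⟩ := hc.preconnected ⟨x, hx⟩ ⟨y, hy⟩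
  have hne : (⟨x, hx⟩ : (S : Set V)) ≠ ⟨y, hy⟩ :=
    fun h' => hxy (congrArg Subtype.val h')
  have hadj := w.adj_snd (SimpleGraph.Walk.not_nil_of_ne hne)
  exact h ((w.getVert 1) : V) (by exact_mod_cast (w.getVert 1).2) hadj

theorem stmt5 {V : Type*} [Fintype V] [DecidableEq V] (k r : ℕ) (hk : 3 ≤ k)
    (hr : 3 * k - 6 ≤ r) (hcard : Fintype.card V = r + 1) (v : V)
    (K : SimpleGraph V)
    (hK : ∀ x y, K.Adj x y ↔ ((x = v ∧ y ≠ v) ∨ (y = v ∧ x ≠ v)))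
    (G : SimpleGraph V) (hfree : G.CliqueFree 3)
    (hSk : connSets k G = connSets k K) :
    G = K := by
  classical
  have noTri : ∀ a b c : V, G.Adj a b → G.Adj a c → G.Adj b c → False := by
    intro a b c h1 h2 h3
    exact hfree {a, b, c} (SimpleGraph.is3Clique_triple_iff.mpr ⟨h1, h2, h3⟩)
  have key : ∀ S : Finset V, S.card = k → ((G.induce (S : Set V)).Connected ↔ v ∈ S) := by
    intro S hS
    have hmem : S ∈ connSets k G ↔ S ∈ connSets k K := by rw [hSk]
    simp only [connSets, Set.mem_setOf_eq, hS, true_and] at hmem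
    rw [hmem]
    constructor
    · intro hc
      by_contra hv
      obtain ⟨a, ha, b, hb, hab⟩ := Finset.one_lt_card.mp (by rw [hS]; omega)
      refine not_conn_isolated K S a b ha hb hab ?_ hc
      intro z hz hadj
      rcases (hK a z).mp hadj with ⟨h1, _⟩ | ⟨h1, _⟩
      · exact hv (h1 ▸ ha)
      · exact hv (h1 ▸ hz)
    · intro hv
      refine star_conn K S v hv ?_
      intro x hx hxv
      exact (hK v x).mpr (Or.inl ⟨rfl, hxv⟩)
  have hall : ∀ u : V, u ≠ v → G.Adj v u := by
    by_contra hcon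
    push_neg at hcon
    obtain ⟨u, huv, hadj⟩ := hcon
    set Nv : Finset V := univ.filter (fun w => G.Adj v w) with hNv
    set Nu : Finset V := univ.filter (fun w => G.Adj u w) with hNu
    set M : Finset V := univ.filter (fun w => w ≠ v ∧ ¬ G.Adj v w) with hM
    have hvNv : v ∉ Nv := by simp [hNv]
    have huNv : u ∉ Nv := by simp [hNv]; exact hadj
    have huNu : u ∉ Nu := by simp [hNu]
    have hvNu : v ∉ Nu := by simp [hNu]; exact fun h => hadj h.symm
    -- Step 1 : few non-neighbors of v
    have hM_card : M.card ≤ k - 2 := by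
      by_contra hlt
      push_neg at hlt
      obtain ⟨T, hTsub, hTcard⟩ := Finset.exists_subset_card_eq (show k - 1 ≤ M.card by omega)
      have hvT : v ∉ T := fun h => (Finset.mem_filter.mp (hTsub h)).2.1 rfl
      have hScard : (insert v T).card = k := by
        rw [Finset.card_insert_of_notMem hvT, hTcard]; omega
      have hconn := (key _ hScard).mpr (Finset.mem_insert_self v T)
      obtain ⟨y, hy⟩ := Finset.card_pos.mp (by rw [hTcard]; omega : 0 < T.card)
      have hyv : y ≠ v := fun h => hvT (h ▸ hy)
      refine not_conn_isolated G (insert v T) v y (mem_insert_self v T)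
        (mem_insert_of_mem hy) (Ne.symm hyv) ?_ hconn
      intro z hz hadjz
      rcases Finset.mem_insert.mp hz with rfl | hzT
      · exact G.loopless.irrefl _ hadjz
      · exact (Finset.mem_filter.mp (hTsub hzT)).2.2 hadjz
    -- Step 2 : few neighbors of u
    have hNu_card : Nu.card ≤ k - 2 := by
      by_contra hlt
      push_neg at hlt
      obtain ⟨T, hTsub, hTcard⟩ := Finset.exists_subset_card_eq (show k - 1 ≤ Nu.card by omega)
      have huT : u ∉ T := fun h => huNu (hTsub h)
      have hScard : (insert u T).card = k := by
        rw [Finset.card_insert_of_notMem huT, hTcard]; omega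
      have hconn : (G.induce ((insert u T : Finset V) : Set V)).Connected := by
        refine star_conn G _ u (mem_insert_self u T) ?_
        intro x hx hxu
        rcases Finset.mem_insert.mp hx with rfl | hxT
        · exact absurd rfl hxu
        · exact (Finset.mem_filter.mp (hTsub hxT)).2
      have hv' := (key _ hScard).mp hconn
      rcases Finset.mem_insert.mp hv' with h' | hvT
      · exact huv h'.symm
      · exact hvNu (hTsub hvT)
    -- Step 3 : almost all neighbors of v are neighbors of u
    have hNvNu_card : (Nv \ Nu).card ≤ k - 3 := by
      by_contra hlt
      push_neg at hlt
      obtain ⟨T, hTsub, hTcard⟩ := Finset.exists_subset_card_eq (show k - 2 ≤ (Nv \ Nu).card by omega)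
      have huT : u ∉ T := fun h => huNv (Finset.mem_sdiff.mp (hTsub h)).1
      have hvT : v ∉ T := fun h => hvNv (Finset.mem_sdiff.mp (hTsub h)).1
      have hvuT : v ∉ insert u T := by
        simp only [Finset.mem_insert]
        rintro (h' | h')
        · exact huv h'.symm
        · exact hvT h'
      have hScard : (insert v (insert u T)).card = k := by
        rw [Finset.card_insert_of_notMem hvuT, Finset.card_insert_of_notMem huT, hTcard]
        omega
      have hconn := (key _ hScard).mpr (mem_insert_self _ _)
      refine not_conn_isolated G _ u v (mem_insert_of_mem (mem_insert_self u T))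
        (mem_insert_self _ _) huv ?_ hconn
      intro z hz hadjz
      rcases Finset.mem_insert.mp hz with rfl | hz'
      · exact hadj hadjz.symm
      rcases Finset.mem_insert.mp hz' with rfl | hzT
      · exact G.loopless.irrefl _ hadjz
      · have hzM := (Finset.mem_sdiff.mp (hTsub hzT)).2
        simp only [hNu, Finset.mem_filter, Finset.mem_univ, true_and] at hzM
        exact hzM hadjz
    -- counting
    have hcover : (univ : Finset V) ⊆ insert v (Nv ∪ M) := by
      intro w _
      by_cases h1 : w = v
      · subst h1; exact mem_insert_self _ _
      by_cases h2 : G.Adj v w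
      · exact mem_insert_of_mem (Finset.mem_union_left _ (by simp [hNv, h2]))
      · exact mem_insert_of_mem (Finset.mem_union_right _ (by simp [hM, h1, h2]))
    have h4 : r + 1 ≤ 1 + (Nv.card + M.card) := by
      have h0 : (univ : Finset V).card = r + 1 := by rw [Finset.card_univ, hcard]
      calc r + 1 = (univ : Finset V).card := h0.symm
        _ ≤ (insert v (Nv ∪ M)).card := Finset.card_le_card hcover
        _ ≤ 1 + (Nv ∪ M).card := by
            rw [add_comm]; exact Finset.card_insert_le _ _
        _ ≤ 1 + (Nv.card + M.card) := by
            exact Nat.add_le_add_left (Finset.card_union_le _ _) 1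
    have h5 : Nv.card ≤ (Nv \ Nu).card + Nu.card := by
      refine le_trans (Finset.card_le_card (fun w hw => ?_)) (Finset.card_union_le _ _)
      by_cases h : w ∈ Nu <;> simp [Finset.mem_union, Finset.mem_sdiff, hw, h]
    omega
  -- conclude G = K
  ext x y
  rw [hK x y]
  constructor
  · intro h
    by_cases hx : x = v
    · subst hx
      exact Or.inl ⟨rfl, h.ne'⟩
    by_cases hy : y = v
    · subst hy
      exact Or.inr ⟨rfl, hx⟩
    · exact absurd h (fun h' => noTri v x y (hall x hx) (hall y hy) h')
  · rintro (⟨rfl, hy⟩ | ⟨rfl, hx⟩)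
    · exact hall y hy
    · exact (hall x hx).symm
end

section
/- Let S be a finite set with at least two elements, and let E and E_N be disjoint sets of unordered pairs of distinct elements of S. Let u, v ∈ S be distinct with {u,v} ∉ E ∪ E_N. Then the following are equivalent: (a) for every simple graph G on S with E ⊆ E(G) and E(G) ∩ E_N = ∅, the graph G with the edge uv added is connected if and only if the graph G with the edge uv removed is connected; (b) either u and v are joined by a path all of whose edges lie in E, or the graph on S whose edge set consists of all pairs of distinct elements of S not belonging to E_N is disconnected. -/
open SimpleGraph

private def within {V : Type*} (M : SimpleGraph V) (P : Set V) : SimpleGraph V where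
  Adj a b := M.Adj a b ∧ a ∈ P ∧ b ∈ P
  symm := ⟨fun a b h => ⟨h.1.symm, h.2.2, h.2.1⟩⟩
  loopless := ⟨fun a h => M.loopless.irrefl a h.1⟩

private lemma within_mono {V : Type*} {M : SimpleGraph V} {P Q : Set V} (h : P ⊆ Q) :
    within M P ≤ within M Q := fun _ _ ha => ⟨ha.1, h ha.2.1, h ha.2.2⟩

private lemma within_le {V : Type*} {M : SimpleGraph V} {P : Set V} :
    within M P ≤ M := fun _ _ ha => ha.1

private lemma reach_of_adj_reach {V : Type*} {H H' : SimpleGraph V}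
    (h : ∀ a b, H.Adj a b → H'.Reachable a b) :
    ∀ a b, H.Reachable a b → H'.Reachable a b := by
  intro a b hr
  obtain ⟨w⟩ := hr
  induction w with
  | nil => exact .refl _
  | cons hadj p ih => exact (h _ _ hadj).trans ih

private lemma reach_lift {V : Type*} {H H' : SimpleGraph V} {P : Set V}
    (hP : ∀ a b, H.Adj a b → a ∈ P → b ∈ P)
    (hadj : ∀ a b, H.Adj a b → a ∈ P → b ∈ P → H'.Adj a b) :
    ∀ a b, H.Reachable a b → a ∈ P → b ∈ P ∧ H'.Reachable a b := by
  intro a b hr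
  obtain ⟨w⟩ := hr
  induction w with
  | nil => exact fun ha => ⟨ha, .refl _⟩
  | @cons a c b h p ih =>
    intro ha
    have hc := hP _ _ h ha
    obtain ⟨hb, hr⟩ := ih hc
    exact ⟨hb, (hadj _ _ h ha hc).reachable.trans hr⟩

private lemma exists_bridge {V : Type*} {M : SimpleGraph V} {P C : Set V}
    (hCP : ∀ y ∈ C, y ∉ P)
    (hCclose : ∀ a b, M.Adj a b → a ∈ C → b ∉ P → b ∈ C) :
    ∀ a b, M.Reachable a b → a ∈ C → b ∈ P → ∃ c p, c ∈ C ∧ p ∈ P ∧ M.Adj c p := by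
  intro a b hr
  obtain ⟨w⟩ := hr
  induction w with
  | nil => exact fun ha hb => absurd hb (hCP _ ha)
  | @cons a c b h p ih =>
    intro ha hb
    by_cases hc : c ∈ P
    · exact ⟨a, c, ha, hc, h⟩
    · exact ih (hCclose _ _ h ha hc) hb

theorem stmt7 {V : Type*} [Fintype V] [Nontrivial V]
    (E EN : Set (Sym2 V))
    (hE : ∀ e ∈ E, ¬ e.IsDiag) (hEN : ∀ e ∈ EN, ¬ e.IsDiag)
    (hdisj : Disjoint E EN)
    (u v : V) (huv : u ≠ v) (hunk : s(u, v) ∉ E ∪ EN) :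
    (∀ G : SimpleGraph V, E ⊆ G.edgeSet → Disjoint G.edgeSet EN →
        ((G ⊔ SimpleGraph.fromEdgeSet {s(u, v)}).Connected ↔
          (G.deleteEdges {s(u, v)}).Connected))
      ↔
    ((SimpleGraph.fromEdgeSet E).Reachable u v ∨
      ¬ (SimpleGraph.fromEdgeSet ENᶜ).Connected) := by
  classical
  have hne : Nonempty V := inferInstance
  have huvE : s(u, v) ∉ E := fun h => hunk (Or.inl h)
  have huvEN : s(u, v) ∉ EN := fun h => hunk (Or.inr h)
  set M : SimpleGraph V := SimpleGraph.fromEdgeSet ENᶜ with hMdef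
  constructor
  · intro ha
    by_contra hb
    push_neg at hb
    obtain ⟨hR, hC⟩ := hb
    have hEle : SimpleGraph.fromEdgeSet E ≤ M := by
      rw [hMdef]
      apply SimpleGraph.fromEdgeSet_mono
      intro e he
      exact Set.disjoint_left.mp hdisj he
    set F : Set (Set V) := {P | u ∈ P ∧ v ∉ P ∧
      (∀ a b, (SimpleGraph.fromEdgeSet E).Adj a b → a ∈ P → b ∈ P) ∧
      (∀ x ∈ P, (within M P).Reachable u x)} with hFdef
    set A : Set V := {x | (SimpleGraph.fromEdgeSet E).Reachable u x} with hAdef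
    have hAclose : ∀ a b, (SimpleGraph.fromEdgeSet E).Adj a b → a ∈ A → b ∈ A := by
      intro a b hab haA
      have h' : (SimpleGraph.fromEdgeSet E).Reachable u a := haA
      exact h'.trans hab.reachable
    have hAF : A ∈ F := by
      refine ⟨SimpleGraph.Reachable.refl u, hR, hAclose, ?_⟩
      intro x hx
      have hx' : (SimpleGraph.fromEdgeSet E).Reachable u x := hx
      exact (reach_lift (H := SimpleGraph.fromEdgeSet E) (H' := within M A) (P := A)
        hAclose (fun a b hab haA hbA => ⟨hEle hab, haA, hbA⟩) u x hx'
        (SimpleGraph.Reachable.refl u)).2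
    obtain ⟨P, hPF, hPmax⟩ :=
      Set.Finite.exists_maximalFor Set.ncard F (Set.toFinite F) ⟨A, hAF⟩
    obtain ⟨huP, hvP, hPclose, hPreach⟩ := hPF
    have hcomp : ∀ x, x ∉ P → (within M Pᶜ).Reachable v x := by
      intro x hx
      by_contra hrx
      set C : Set V := {y | y ∉ P ∧ (within M Pᶜ).Reachable x y} with hCdef
      have hxC : x ∈ C := ⟨hx, SimpleGraph.Reachable.refl x⟩
      have hCclose : ∀ a b, (within M Pᶜ).Adj a b → a ∈ C → b ∈ C := by
        intro a b hab haC
        exact ⟨hab.2.2, haC.2.trans hab.reachable⟩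
      obtain ⟨c, p, hcC, hpP, hcp⟩ :=
        exists_bridge (M := M) (P := P) (C := C) (fun y hy => hy.1)
          (fun a b hab haC hbP => hCclose a b ⟨hab, haC.1, hbP⟩ haC)
          x u (hC.preconnected x u) hxC huP
      have hP'F : P ∪ C ∈ F := by
        refine ⟨Or.inl huP, ?_, ?_, ?_⟩
        · rintro (h | h)
          · exact hvP h
          · exact hrx h.2.symm
        · intro a b hab haP'
          rcases haP' with h | h
          · exact Or.inl (hPclose a b hab h)
          · by_cases hbP : b ∈ P
            · exact Or.inl hbP
            · exact Or.inr (hCclose a b ⟨hEle hab, h.1, hbP⟩ h)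
        · intro y hy
          have hPle : within M P ≤ within M (P ∪ C) :=
            within_mono Set.subset_union_left
          rcases hy with h | h
          · exact (hPreach y h).mono hPle
          · have h1 : (within M (P ∪ C)).Reachable u p := (hPreach p hpP).mono hPle
            have h2 : (within M (P ∪ C)).Adj p c := ⟨hcp.symm, Or.inl hpP, Or.inr hcC⟩
            have h3 : (within M (P ∪ C)).Reachable c y :=
              (reach_lift (H := within M Pᶜ) (H' := within M (P ∪ C)) (P := C)
                hCclose (fun a b hab haC hbC => ⟨hab.1, Or.inr haC, Or.inr hbC⟩)
                c y (hcC.2.symm.trans h.2) hcC).2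
            exact (h1.trans h2.reachable).trans h3
      have hsub : P ⊆ P ∪ C := Set.subset_union_left
      have heq := hPmax hP'F (Set.ncard_le_ncard hsub (Set.toFinite _))
      have hPP : P = P ∪ C := Set.eq_of_subset_of_ncard_le hsub heq.ge (Set.toFinite _)
      have hxP : x ∈ P := by rw [hPP]; exact Or.inr hxC
      exact hx hxP
    set G : SimpleGraph V := within M P ⊔ within M Pᶜ with hGdef
    have hMadj : ∀ a b, s(a, b) ∈ E → M.Adj a b := by
      intro a b he
      rw [hMdef, SimpleGraph.fromEdgeSet_adj]
      refine ⟨Set.disjoint_left.mp hdisj he, ?_⟩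
      intro h
      exact hE _ he (by simp [h])
    have hEadj : ∀ a b, s(a, b) ∈ E → (SimpleGraph.fromEdgeSet E).Adj a b := by
      intro a b he
      rw [SimpleGraph.fromEdgeSet_adj]
      refine ⟨he, ?_⟩
      intro h
      exact hE _ he (by simp [h])
    have hEGs : E ⊆ G.edgeSet := by
      intro e
      induction e using Sym2.ind with
      | _ a b =>
        intro he
        rw [SimpleGraph.mem_edgeSet, hGdef, SimpleGraph.sup_adj]
        by_cases haP : a ∈ P
        · exact Or.inl ⟨hMadj a b he, haP, hPclose a b (hEadj a b he) haP⟩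
        · have hbP : b ∉ P := fun hb => haP (hPclose b a (hEadj a b he).symm hb)
          exact Or.inr ⟨hMadj a b he, haP, hbP⟩
    have hGdisj : Disjoint G.edgeSet EN := by
      rw [Set.disjoint_left]
      intro e
      induction e using Sym2.ind with
      | _ a b =>
        intro heG heN
        rw [SimpleGraph.mem_edgeSet, hGdef, SimpleGraph.sup_adj] at heG
        have hM : M.Adj a b := by rcases heG with h | h; exacts [h.1, h.1]
        rw [hMdef, SimpleGraph.fromEdgeSet_adj] at hM
        exact hM.1 heN
    have hiff := ha G hEGs hGdisj
    have hconn : (G ⊔ SimpleGraph.fromEdgeSet {s(u, v)}).Connected := by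
      have hreach : ∀ x, (G ⊔ SimpleGraph.fromEdgeSet {s(u, v)}).Reachable u x := by
        intro x
        by_cases hxP : x ∈ P
        · exact (hPreach x hxP).mono (le_trans le_sup_left le_sup_left)
        · have h1 : (G ⊔ SimpleGraph.fromEdgeSet {s(u, v)}).Reachable v x :=
            (hcomp x hxP).mono (le_trans le_sup_right le_sup_left)
          have h2 : (G ⊔ SimpleGraph.fromEdgeSet {s(u, v)}).Adj u v := by
            rw [SimpleGraph.sup_adj]
            exact Or.inr (by rw [SimpleGraph.fromEdgeSet_adj]; exact ⟨rfl, huv⟩)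
          exact h2.reachable.trans h1
      exact ⟨fun a b => (hreach a).symm.trans (hreach b)⟩
    have hnconn : ¬ (G.deleteEdges {s(u, v)}).Connected := by
      intro h
      have hpres : ∀ a b, (G.deleteEdges {s(u, v)}).Adj a b → a ∈ P → b ∈ P := by
        intro a b hab haP
        rcases (SimpleGraph.sup_adj _ _ _ _).mp (SimpleGraph.deleteEdges_adj.mp hab).1 with h' | h'
        · exact h'.2.2
        · exact absurd haP h'.2.1
      have hadj2 : ∀ a b, (G.deleteEdges {s(u, v)}).Adj a b → a ∈ P → b ∈ P →
          (within M P).Adj a b := by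
        intro a b hab haP hbP
        rcases (SimpleGraph.sup_adj _ _ _ _).mp (SimpleGraph.deleteEdges_adj.mp hab).1 with h' | h'
        · exact h'
        · exact absurd haP h'.2.1
      exact hvP (reach_lift hpres hadj2 u v (h.preconnected u v) huP).1
    exact hnconn (hiff.mp hconn)
  · rintro (hR | hC) G hEG hGEN
    · -- u, v joined by an E-path: the edge uv never matters
      have hEle : SimpleGraph.fromEdgeSet E ≤ G.deleteEdges {s(u, v)} := by
        intro a b hab
        rw [SimpleGraph.fromEdgeSet_adj] at hab
        rw [SimpleGraph.deleteEdges_adj]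
        refine ⟨hEG hab.1, ?_⟩
        intro hmem
        exact huvE (Set.mem_singleton_iff.mp hmem ▸ hab.1)
      have hRuv : (G.deleteEdges {s(u, v)}).Reachable u v := hR.mono hEle
      constructor
      · intro h
        have hp : (G.deleteEdges {s(u, v)}).Preconnected := by
          intro a b
          refine reach_of_adj_reach (fun a b hab => ?_) a b (h.preconnected a b)
          rcases hab with hab | hab
          · by_cases he : s(a, b) = s(u, v)
            · rcases Sym2.eq_iff.mp he with ⟨rfl, rfl⟩ | ⟨rfl, rfl⟩
              · exact hRuv
              · exact hRuv.symm
            · exact (SimpleGraph.deleteEdges_adj.mpr ⟨hab, he⟩).reachable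
          · rw [SimpleGraph.fromEdgeSet_adj] at hab
            rcases Sym2.eq_iff.mp (Set.mem_singleton_iff.mp hab.1) with ⟨rfl, rfl⟩ | ⟨rfl, rfl⟩
            · exact hRuv
            · exact hRuv.symm
        exact ⟨hp⟩
      · intro h
        exact h.mono (le_trans (SimpleGraph.deleteEdges_le _) le_sup_left)
    · -- the graph of all non-EN pairs is disconnected: both sides always false
      have hGle : G ≤ M := by
        intro a b hab
        rw [hMdef, SimpleGraph.fromEdgeSet_adj]
        exact ⟨Set.disjoint_left.mp hGEN hab, hab.ne⟩
      have hle : G ⊔ SimpleGraph.fromEdgeSet {s(u, v)} ≤ M := by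
        refine sup_le hGle ?_
        intro a b hab
        rw [SimpleGraph.fromEdgeSet_adj] at hab
        rw [hMdef, SimpleGraph.fromEdgeSet_adj]
        refine ⟨?_, hab.2⟩
        rw [Set.mem_singleton_iff.mp hab.1]
        exact huvEN
      constructor
      · intro h; exact absurd (h.mono hle) hC
      · intro h
        exact absurd (h.mono (le_trans (SimpleGraph.deleteEdges_le _) hGle)) hC
end

section
/- Let k ≥ 2 be an integer. Let G₁ and G₂ be triangle-free simple graphs on the same finite vertex set V with S_k(G₁) = S_k(G₂), let u ∈ V, and let Z ⊆ V be a set of 2k − 4 vertices with Z ⊆ N_{G₁}(u) ∩ N_{G₂}(u). Then N_{G₁}(u) = N_{G₂}(u); moreover, writing X = N_{G₁}(u) and Y = N_{G₁}({u} ∪ X) (the open neighborhood of {u} ∪ X in G₁), one has N_{G₂}({u} ∪ X) = Y, every pair {s,t} with s ∈ {u} ∪ X and t ∈ V is an edge of G₁ if and only if it is an edge of G₂, and every pair {s,t} with s, t ∈ Y is an edge of G₁ if and only if it is an edge of G₂. -/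
/-- The open neighborhood of a set `T` of vertices in a graph `G`:
`N_G(T) = (⋃_{t ∈ T} N_G(t)) \ T`. -/
def setNbhd {V : Type*} (G : SimpleGraph V) (T : Set V) : Set V :=
  {x | x ∉ T ∧ ∃ t ∈ T, G.Adj t x}


lemma tri_helper {V : Type*} [DecidableEq V] {G : SimpleGraph V} (h : G.CliqueFree 3) {a b c : V}
    (hab : G.Adj a b) (hac : G.Adj a c) (hbc : G.Adj b c) : False :=
  h {a,b,c} (SimpleGraph.is3Clique_triple_iff.mpr ⟨hab, hac, hbc⟩)

lemma exists_adj_of_connected {V : Type*} {G : SimpleGraph V} {S : Set V}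
    (h : (G.induce S).Connected) {a b : V} (ha : a ∈ S) (hb : b ∈ S) (hab : a ≠ b) :
    ∃ c ∈ S, G.Adj a c := by
  obtain ⟨w⟩ := h.preconnected ⟨a, ha⟩ ⟨b, hb⟩
  cases w with
  | nil => simp_all
  | cons h' p => exact ⟨_, Subtype.coe_prop _, h'⟩

lemma connected_of_rank {V : Type*} (G : SimpleGraph V) (S : Set V) (c : V) (hc : c ∈ S)
    (d : V → ℕ)
    (h : ∀ x ∈ S, x = c ∨ ∃ y ∈ S, G.Adj y x ∧ d y < d x) :
    (G.induce S).Connected := by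
  have key : ∀ n, ∀ x, ∀ hx : x ∈ S, d x ≤ n → (G.induce S).Reachable ⟨x, hx⟩ ⟨c, hc⟩ := by
    intro n
    induction n with
    | zero =>
      intro x hx hd
      rcases h x hx with rfl | ⟨y, hy, hadj, hlt⟩
      · rfl
      · omega
    | succ n ih =>
      intro x hx hd
      rcases h x hx with rfl | ⟨y, hy, hadj, hlt⟩
      · rfl
      · exact (SimpleGraph.Adj.reachable
          (show (G.induce S).Adj ⟨x, hx⟩ ⟨y, hy⟩ from hadj.symm)).trans (ih y hy (by omega))
  rw [SimpleGraph.connected_iff]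
  refine ⟨?_, ⟨⟨c, hc⟩⟩⟩
  rintro ⟨x, hx⟩ ⟨y, hy⟩
  exact (key _ x hx le_rfl).trans (key _ y hy le_rfl).symm

lemma star_connected {V : Type*} (G : SimpleGraph V) (S : Set V) (c : V) (hc : c ∈ S)
    (h : ∀ x ∈ S, x ≠ c → G.Adj c x) : (G.induce S).Connected := by
  classical
  refine connected_of_rank G S c hc (fun x => if x = c then 0 else 1) ?_
  intro x hx
  by_cases hxc : x = c
  · exact Or.inl hxc
  · exact Or.inr ⟨c, hc, h x hx hxc, by
      show (if c = c then (0:ℕ) else 1) < (if x = c then 0 else 1)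
      rw [if_pos rfl, if_neg hxc]
      omega⟩

-- pair lemma for k = 2 style arguments
lemma pair_conn_iff {V : Type*} [DecidableEq V] (G : SimpleGraph V) {s t : V} (hst : s ≠ t) :
    (G.induce (({s, t} : Finset V) : Set V)).Connected ↔ G.Adj s t := by
  constructor
  · intro h
    obtain ⟨c, hc, hadj⟩ := exists_adj_of_connected h (by simp) (by simp [Finset.mem_insert]) hst
    simp only [Finset.coe_insert, Finset.coe_singleton, Set.mem_insert_iff,
      Set.mem_singleton_iff] at hc
    rcases hc with rfl | rfl
    · exact absurd hadj (G.irrefl)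
    · exact hadj
  · intro h
    refine star_connected G _ s (by simp) ?_
    intro x hx hxs
    simp only [Finset.coe_insert, Finset.coe_singleton, Set.mem_insert_iff,
      Set.mem_singleton_iff] at hx
    rcases hx with rfl | rfl
    · exact absurd rfl hxs
    · exact h


lemma key1 {V : Type*} [Fintype V] [DecidableEq V] (k : ℕ) (hk : 2 ≤ k)
    (G₁ G₂ : SimpleGraph V) (hfree₁ : G₁.CliqueFree 3)
    (hSk : connSets k G₁ = connSets k G₂)
    (u : V) (Z : Finset V) (hZcard : Z.card = 2 * k - 4)
    (hZ : (Z : Set V) ⊆ G₁.neighborSet u ∩ G₂.neighborSet u)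
    {v : V} (hv : G₁.Adj u v) : G₂.Adj u v := by
  classical
  by_contra hnv
  have hZ1 : ∀ z ∈ Z, G₁.Adj u z := fun z hz => (hZ hz).1
  have hZ2 : ∀ z ∈ Z, G₂.Adj u z := fun z hz => (hZ hz).2
  have huZ : u ∉ Z := fun h => G₁.irrefl (hZ1 u h)
  have hvZ : v ∉ Z := fun h => hnv (hZ2 v h)
  have huv : u ≠ v := hv.ne
  set B := Z.filter (fun z => G₂.Adj v z) with hB
  have hBsub : B ⊆ Z := Finset.filter_subset _ _
  by_cases hBcard : B.card ≤ k - 2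
  · obtain ⟨W, hWsub, hWcard⟩ := Finset.exists_subset_card_eq
      (show k - 2 ≤ (Z \ B).card from by
        rw [Finset.card_sdiff_of_subset hBsub, hZcard]; omega)
    have hWZ : W ⊆ Z := hWsub.trans Finset.sdiff_subset
    have hvW : v ∉ W := fun h => hvZ (hWZ h)
    have huW : u ∉ W := fun h => huZ (hWZ h)
    set S : Finset V := insert u (insert v W) with hS
    have hcard : S.card = k := by
      rw [hS, Finset.card_insert_of_notMem (by simp [huv, huW]),
        Finset.card_insert_of_notMem hvW, hWcard]
      omega
    have hmem : ∀ x, x ∈ (S : Set V) ↔ x = u ∨ x = v ∨ x ∈ W := by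
      intro x; simp [hS]
    have hconn1 : (G₁.induce (S : Set V)).Connected := by
      refine star_connected _ _ u ((hmem u).mpr (Or.inl rfl)) ?_
      intro x hx hxu
      rcases (hmem x).mp hx with rfl | rfl | hxW
      · exact absurd rfl hxu
      · exact hv
      · exact hZ1 x (hWZ hxW)
    have hS1 : S ∈ connSets k G₁ := ⟨hcard, hconn1⟩
    have hS2 : S ∈ connSets k G₂ := hSk ▸ hS1
    obtain ⟨c, hc, hadj⟩ := exists_adj_of_connected hS2.2
      ((hmem v).mpr (Or.inr (Or.inl rfl))) ((hmem u).mpr (Or.inl rfl)) huv.symm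
    rcases (hmem c).mp hc with rfl | rfl | hcW
    · exact hnv hadj.symm
    · exact G₂.irrefl hadj
    · have : c ∈ B := Finset.mem_filter.mpr ⟨hWZ hcW, hadj⟩
      exact (Finset.mem_sdiff.mp (hWsub hcW)).2 this
  · push_neg at hBcard
    obtain ⟨B', hB'sub, hB'card⟩ := Finset.exists_subset_card_eq
      (show k - 1 ≤ B.card from by omega)
    have hB'Z : B' ⊆ Z := hB'sub.trans hBsub
    have hvB' : v ∉ B' := fun h => hvZ (hB'Z h)
    set S : Finset V := insert v B' with hS
    have hcard : S.card = k := by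
      rw [hS, Finset.card_insert_of_notMem hvB', hB'card]; omega
    have hmem : ∀ x, x ∈ (S : Set V) ↔ x = v ∨ x ∈ B' := by intro x; simp [hS]
    have hconn2 : (G₂.induce (S : Set V)).Connected := by
      refine star_connected _ _ v ((hmem v).mpr (Or.inl rfl)) ?_
      intro x hx hxv
      rcases (hmem x).mp hx with rfl | hxB
      · exact absurd rfl hxv
      · exact (Finset.mem_filter.mp (hB'sub hxB)).2
    have hS1 : S ∈ connSets k G₁ := hSk.symm ▸ (⟨hcard, hconn2⟩ : S ∈ connSets k G₂)
    obtain ⟨b, hbB'⟩ : ∃ b, b ∈ B' := Finset.card_pos.mp (by omega)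
    have hb_v : b ≠ v := fun h => hvB' (h ▸ hbB')
    obtain ⟨c, hc, hadj⟩ := exists_adj_of_connected hS1.2
      ((hmem b).mpr (Or.inr hbB')) ((hmem v).mpr (Or.inl rfl)) hb_v
    rcases (hmem c).mp hc with rfl | hcB
    · exact tri_helper hfree₁ hv (hZ1 b (hB'Z hbB')) hadj.symm
    · exact tri_helper hfree₁ (hZ1 b (hB'Z hbB')) (hZ1 c (hB'Z hcB)) hadj

lemma key2 {V : Type*} [Fintype V] [DecidableEq V] (k : ℕ) (hk : 2 ≤ k)
    (G₁ G₂ : SimpleGraph V) (hfree₁ : G₁.CliqueFree 3) (hfree₂ : G₂.CliqueFree 3)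
    (hSk : connSets k G₁ = connSets k G₂)
    (u : V) (Z : Finset V) (hZcard : Z.card = 2 * k - 4)
    (hZ : (Z : Set V) ⊆ G₁.neighborSet u ∩ G₂.neighborSet u)
    (hX : G₁.neighborSet u = G₂.neighborSet u)
    {s t : V} (hs : G₁.Adj u s) (hst : G₁.Adj s t) : G₂.Adj s t := by
  classical
  have hZ1 : ∀ z ∈ Z, G₁.Adj u z := fun z hz => (hZ hz).1
  have hZ2 : ∀ z ∈ Z, G₂.Adj u z := fun z hz => (hZ hz).2
  have huZ : u ∉ Z := fun h => G₁.irrefl (hZ1 u h)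
  have hs2 : G₂.Adj u s := by
    have : s ∈ G₂.neighborSet u := hX ▸ (hs : s ∈ G₁.neighborSet u)
    exact this
  by_cases htu : t = u
  · subst htu; exact hs2.symm
  by_cases hut1 : G₁.Adj u t
  · exact (tri_helper hfree₁ hs hut1 hst).elim
  have hut2 : ¬ G₂.Adj u t := by
    intro h
    exact hut1 (by have : t ∈ G₁.neighborSet u := hX ▸ (h : t ∈ G₂.neighborSet u); exact this)
  have hsu : s ≠ u := hs.ne'
  have hst' : s ≠ t := hst.ne
  have htZ : t ∉ Z := fun h => hut1 (hZ1 t h)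
  by_contra hn
  by_cases hk2 : k = 2
  · subst hk2
    have h1 : ({s, t} : Finset V) ∈ connSets 2 G₁ := by
      refine ⟨by rw [Finset.card_insert_of_notMem (by simp [hst']), Finset.card_singleton], ?_⟩
      exact (pair_conn_iff G₁ hst').mpr hst
    have h2 := hSk ▸ h1
    exact hn ((pair_conn_iff G₂ hst').mp h2.2)
  have hk3 : 3 ≤ k := by omega
  set B := Z.filter (fun z => G₂.Adj t z) with hB
  have hBsub : B ⊆ Z := Finset.filter_subset _ _
  by_cases hBcard : B.card ≤ k - 2
  · have herase : k - 3 ≤ ((Z \ B).erase s).card := by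
      by_cases hsmem : s ∈ Z \ B
      · rw [Finset.card_erase_of_mem hsmem, Finset.card_sdiff_of_subset hBsub, hZcard]; omega
      · rw [Finset.erase_eq_of_notMem hsmem, Finset.card_sdiff_of_subset hBsub, hZcard]; omega
    obtain ⟨W, hWsub, hWcard⟩ := Finset.exists_subset_card_eq herase
    have hWZ : W ⊆ Z := fun x hx => Finset.sdiff_subset (Finset.erase_subset _ _ (hWsub hx))
    have hsW : s ∉ W := fun h => (Finset.mem_erase.mp (hWsub h)).1 rfl
    have htW : t ∉ W := fun h => htZ (hWZ h)
    have huW : u ∉ W := fun h => huZ (hWZ h)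
    have hWB : ∀ w ∈ W, ¬ G₂.Adj t w := by
      intro w hw hadj
      exact (Finset.mem_sdiff.mp (Finset.mem_erase.mp (hWsub hw)).2).2
        (Finset.mem_filter.mpr ⟨hWZ hw, hadj⟩)
    set S : Finset V := insert u (insert s (insert t W)) with hS
    have hcard : S.card = k := by
      rw [hS, Finset.card_insert_of_notMem (by simp [Ne.symm hsu, Ne.symm htu, huW]),
        Finset.card_insert_of_notMem (by simp [hst', hsW]),
        Finset.card_insert_of_notMem htW, hWcard]
      omega
    have hmem : ∀ x, x ∈ (S : Set V) ↔ x = u ∨ x = s ∨ x = t ∨ x ∈ W := by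
      intro x; simp [hS]
    set d : V → ℕ := fun x => if x = u then 0 else if x = t then 2 else 1 with hd
    have hdu : d u = 0 := by simp [hd]
    have hdt : d t = 2 := by simp [hd, htu]
    have hd1 : ∀ x, x ≠ u → x ≠ t → d x = 1 := by intro x h1 h2; simp [hd, h1, h2]
    have hconn1 : (G₁.induce (S : Set V)).Connected := by
      refine connected_of_rank _ _ u ((hmem u).mpr (Or.inl rfl)) d ?_
      intro x hx
      rcases (hmem x).mp hx with rfl | rfl | rfl | hxW
      · exact Or.inl rfl
      · exact Or.inr ⟨u, (hmem u).mpr (Or.inl rfl), hs, by rw [hdu, hd1 x hsu hst']; omega⟩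
      · exact Or.inr ⟨s, (hmem s).mpr (Or.inr (Or.inl rfl)), hst,
          by rw [hdt, hd1 s hsu hst']; omega⟩
      · have hxu : x ≠ u := fun h => huW (h ▸ hxW)
        have hxt : x ≠ t := fun h => htW (h ▸ hxW)
        exact Or.inr ⟨u, (hmem u).mpr (Or.inl rfl), hZ1 x (hWZ hxW),
          by rw [hdu, hd1 x hxu hxt]; omega⟩
    have hS2 : S ∈ connSets k G₂ := hSk ▸ (⟨hcard, hconn1⟩ : S ∈ connSets k G₁)
    obtain ⟨c, hc, hadj⟩ := exists_adj_of_connected hS2.2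
      ((hmem t).mpr (Or.inr (Or.inr (Or.inl rfl)))) ((hmem u).mpr (Or.inl rfl)) htu
    rcases (hmem c).mp hc with rfl | rfl | rfl | hcW
    · exact hut2 hadj.symm
    · exact hn hadj.symm
    · exact G₂.irrefl hadj
    · exact hWB c hcW hadj
  · push_neg at hBcard
    obtain ⟨B', hB'sub, hB'card⟩ := Finset.exists_subset_card_eq
      (show k - 1 ≤ B.card from by omega)
    have hB'Z : B' ⊆ Z := hB'sub.trans hBsub
    have htB' : t ∉ B' := fun h => htZ (hB'Z h)
    set S' : Finset V := insert t B' with hS'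
    have hcard' : S'.card = k := by
      rw [hS', Finset.card_insert_of_notMem htB', hB'card]; omega
    have hmem' : ∀ x, x ∈ (S' : Set V) ↔ x = t ∨ x ∈ B' := by intro x; simp [hS']
    have hconn2 : (G₂.induce (S' : Set V)).Connected := by
      refine star_connected _ _ t ((hmem' t).mpr (Or.inl rfl)) ?_
      intro x hx hxt
      rcases (hmem' x).mp hx with rfl | hxB
      · exact absurd rfl hxt
      · exact (Finset.mem_filter.mp (hB'sub hxB)).2
    have hS'1 : S' ∈ connSets k G₁ := hSk.symm ▸ (⟨hcard', hconn2⟩ : S' ∈ connSets k G₂)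
    have hadj1 : ∀ b ∈ B', G₁.Adj t b := by
      intro b hb
      have hbt : b ≠ t := fun h => htB' (h ▸ hb)
      obtain ⟨c, hc, hadj⟩ := exists_adj_of_connected hS'1.2
        ((hmem' b).mpr (Or.inr hb)) ((hmem' t).mpr (Or.inl rfl)) hbt
      rcases (hmem' c).mp hc with rfl | hcB
      · exact hadj.symm
      · exact (tri_helper hfree₁ (hZ1 b (hB'Z hb)) (hZ1 c (hB'Z hcB)) hadj).elim
    have herase : k - 2 ≤ (B'.erase s).card := by
      by_cases hsmem : s ∈ B'
      · rw [Finset.card_erase_of_mem hsmem, hB'card]; omega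
      · rw [Finset.erase_eq_of_notMem hsmem, hB'card]; omega
    obtain ⟨B'', hB''sub, hB''card⟩ := Finset.exists_subset_card_eq herase
    have hB''B' : B'' ⊆ B' := fun x hx => Finset.erase_subset _ _ (hB''sub hx)
    have hsB'' : s ∉ B'' := fun h => (Finset.mem_erase.mp (hB''sub h)).1 rfl
    have htB'' : t ∉ B'' := fun h => htB' (hB''B' h)
    set S'' : Finset V := insert s (insert t B'') with hS''
    have hcard'' : S''.card = k := by
      rw [hS'', Finset.card_insert_of_notMem (by simp [hst', hsB'']),
        Finset.card_insert_of_notMem htB'', hB''card]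
      omega
    have hmem'' : ∀ x, x ∈ (S'' : Set V) ↔ x = s ∨ x = t ∨ x ∈ B'' := by
      intro x; simp [hS'']
    have hconn1 : (G₁.induce (S'' : Set V)).Connected := by
      refine star_connected _ _ t ((hmem'' t).mpr (Or.inr (Or.inl rfl))) ?_
      intro x hx hxt
      rcases (hmem'' x).mp hx with rfl | rfl | hxB
      · exact hst.symm
      · exact absurd rfl hxt
      · exact hadj1 x (hB''B' hxB)
    have hS''2 : S'' ∈ connSets k G₂ := hSk ▸ (⟨hcard'', hconn1⟩ : S'' ∈ connSets k G₁)
    obtain ⟨c, hc, hadj⟩ := exists_adj_of_connected hS''2.2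
      ((hmem'' s).mpr (Or.inl rfl)) ((hmem'' t).mpr (Or.inr (Or.inl rfl))) hst'
    rcases (hmem'' c).mp hc with rfl | rfl | hcB
    · exact G₂.irrefl hadj
    · exact hn hadj
    · exact tri_helper hfree₂ hs2 (hZ2 c (hB'Z (hB''B' hcB))) hadj


lemma key3 {V : Type*} [Fintype V] [DecidableEq V] (k : ℕ) (hk : 2 ≤ k)
    (G₁ G₂ : SimpleGraph V) (hfree₁ : G₁.CliqueFree 3) (hfree₂ : G₂.CliqueFree 3)
    (hSk : connSets k G₁ = connSets k G₂)
    (u : V) (Z : Finset V) (hZcard : Z.card = 2 * k - 4)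
    (hZ : (Z : Set V) ⊆ G₁.neighborSet u ∩ G₂.neighborSet u)
    (hX : G₁.neighborSet u = G₂.neighborSet u)
    (hEdge : ∀ a b : V, a ∈ ({u} : Set V) ∪ G₁.neighborSet u → (G₁.Adj a b ↔ G₂.Adj a b))
    {s t : V} (hsY : s ∈ setNbhd G₁ ({u} ∪ G₁.neighborSet u))
    (htY : t ∈ setNbhd G₁ ({u} ∪ G₁.neighborSet u))
    (hst : G₁.Adj s t) : G₂.Adj s t := by
  classical
  have hZ1 : ∀ z ∈ Z, G₁.Adj u z := fun z hz => (hZ hz).1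
  have hZ2 : ∀ z ∈ Z, G₂.Adj u z := fun z hz => (hZ hz).2
  have huZ : u ∉ Z := fun h => G₁.irrefl (hZ1 u h)
  have hsu : s ≠ u := by intro h; exact hsY.1 (Or.inl h)
  have htu : t ≠ u := by intro h; exact htY.1 (Or.inl h)
  have hsX : ¬ G₁.Adj u s := by intro h; exact hsY.1 (Or.inr h)
  have htX : ¬ G₁.Adj u t := by intro h; exact htY.1 (Or.inr h)
  have hut2 : ¬ G₂.Adj u t := by
    intro h
    exact htX (by have : t ∈ G₁.neighborSet u := hX ▸ (h : t ∈ G₂.neighborSet u); exact this)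
  have hsZ : s ∉ Z := fun h => hsX (hZ1 s h)
  have htZ : t ∉ Z := fun h => htX (hZ1 t h)
  have hst' : s ≠ t := hst.ne
  obtain ⟨a, ha, has⟩ := hsY.2
  have hxsu : G₁.Adj u a := by
    rcases ha with h1 | h2
    · exact absurd (show a = u from h1) (fun h => hsX (h ▸ has))
    · exact h2
  have hxss : G₁.Adj a s := has
  by_contra hn
  have hxst1 : ¬ G₁.Adj a t := fun h => tri_helper hfree₁ hxss h hst
  have hxst2 : ¬ G₂.Adj a t := fun h => hxst1 ((hEdge a t (Or.inr hxsu)).mpr h)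
  have hxs_ne_t : a ≠ t := fun h => htX (h ▸ hxsu)
  have hxs_ne_s : a ≠ s := hxss.ne
  have hxs_ne_u : a ≠ u := hxsu.ne'
  by_cases hk2 : k = 2
  · subst hk2
    have h1 : ({s, t} : Finset V) ∈ connSets 2 G₁ := by
      refine ⟨by rw [Finset.card_insert_of_notMem (by simp [hst']), Finset.card_singleton], ?_⟩
      exact (pair_conn_iff G₁ hst').mpr hst
    have h2 := hSk ▸ h1
    exact hn ((pair_conn_iff G₂ hst').mp h2.2)
  by_cases hk3 : k = 3
  · subst hk3
    set S : Finset V := insert a (insert s {t}) with hS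
    have hcard : S.card = 3 := by
      rw [hS, Finset.card_insert_of_notMem (by simp [hxs_ne_s, hxs_ne_t]),
        Finset.card_insert_of_notMem (by simp [hst']), Finset.card_singleton]
    have hmem : ∀ x, x ∈ (S : Set V) ↔ x = a ∨ x = s ∨ x = t := by intro x; simp [hS]
    have hconn1 : (G₁.induce (S : Set V)).Connected := by
      refine star_connected _ _ s ((hmem s).mpr (Or.inr (Or.inl rfl))) ?_
      intro x hx hxs
      rcases (hmem x).mp hx with rfl | rfl | rfl
      · exact hxss.symm
      · exact absurd rfl hxs
      · exact hst
    have hS2 : S ∈ connSets 3 G₂ := hSk ▸ (⟨hcard, hconn1⟩ : S ∈ connSets 3 G₁)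
    obtain ⟨c, hc, hadj⟩ := exists_adj_of_connected hS2.2
      ((hmem t).mpr (Or.inr (Or.inr rfl))) ((hmem s).mpr (Or.inr (Or.inl rfl))) (Ne.symm hst')
    rcases (hmem c).mp hc with rfl | rfl | rfl
    · exact hxst2 hadj.symm
    · exact hn hadj.symm
    · exact G₂.irrefl hadj
  have hk4 : 4 ≤ k := by omega
  set B := Z.filter (fun z => G₂.Adj t z) with hB
  have hBsub : B ⊆ Z := Finset.filter_subset _ _
  by_cases hBcard : B.card ≤ k - 2
  · have herase : k - 4 ≤ ((Z \ B).erase a).card := by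
      by_cases hamem : a ∈ Z \ B
      · rw [Finset.card_erase_of_mem hamem, Finset.card_sdiff_of_subset hBsub, hZcard]; omega
      · rw [Finset.erase_eq_of_notMem hamem, Finset.card_sdiff_of_subset hBsub, hZcard]; omega
    obtain ⟨W, hWsub, hWcard⟩ := Finset.exists_subset_card_eq herase
    have hWZ : W ⊆ Z := fun x hx => Finset.sdiff_subset (Finset.erase_subset _ _ (hWsub hx))
    have haW : a ∉ W := fun h => (Finset.mem_erase.mp (hWsub h)).1 rfl
    have hsW : s ∉ W := fun h => hsZ (hWZ h)
    have htW : t ∉ W := fun h => htZ (hWZ h)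
    have huW : u ∉ W := fun h => huZ (hWZ h)
    have hWB : ∀ w ∈ W, ¬ G₂.Adj t w := by
      intro w hw hadj
      exact (Finset.mem_sdiff.mp (Finset.mem_erase.mp (hWsub hw)).2).2
        (Finset.mem_filter.mpr ⟨hWZ hw, hadj⟩)
    set S : Finset V := insert u (insert a (insert s (insert t W))) with hS
    have hcard : S.card = k := by
      rw [hS, Finset.card_insert_of_notMem
          (by simp [Ne.symm hxs_ne_u, Ne.symm hsu, Ne.symm htu, huW]),
        Finset.card_insert_of_notMem (by simp [hxs_ne_s, hxs_ne_t, haW]),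
        Finset.card_insert_of_notMem (by simp [hst', hsW]),
        Finset.card_insert_of_notMem htW, hWcard]
      omega
    have hmem : ∀ x, x ∈ (S : Set V) ↔ x = u ∨ x = a ∨ x = s ∨ x = t ∨ x ∈ W := by
      intro x; simp [hS]
    set d : V → ℕ := fun x => if x = u then 0 else if x = s then 2 else if x = t then 3 else 1
      with hd
    have hdu : d u = 0 := by simp [hd]
    have hds : d s = 2 := by simp [hd, hsu]
    have hdt : d t = 3 := by simp [hd, htu, Ne.symm hst']
    have hd1 : ∀ x, x ≠ u → x ≠ s → x ≠ t → d x = 1 := by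
      intro x h1 h2 h3; simp [hd, h1, h2, h3]
    have hconn1 : (G₁.induce (S : Set V)).Connected := by
      refine connected_of_rank _ _ u ((hmem u).mpr (Or.inl rfl)) d ?_
      intro x hx
      rcases (hmem x).mp hx with rfl | rfl | rfl | rfl | hxW
      · exact Or.inl rfl
      · exact Or.inr ⟨u, (hmem u).mpr (Or.inl rfl), hxsu,
          by rw [hdu, hd1 x hxs_ne_u hxs_ne_s hxs_ne_t]; omega⟩
      · exact Or.inr ⟨a, (hmem a).mpr (Or.inr (Or.inl rfl)), hxss,
          by rw [hds, hd1 a hxs_ne_u hxs_ne_s hxs_ne_t]; omega⟩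
      · exact Or.inr ⟨s, (hmem s).mpr (Or.inr (Or.inr (Or.inl rfl))), hst,
          by rw [hdt, hds]; omega⟩
      · have h1 : x ≠ u := fun h => huW (h ▸ hxW)
        have h2 : x ≠ s := fun h => hsW (h ▸ hxW)
        have h3 : x ≠ t := fun h => htW (h ▸ hxW)
        exact Or.inr ⟨u, (hmem u).mpr (Or.inl rfl), hZ1 x (hWZ hxW),
          by rw [hdu, hd1 x h1 h2 h3]; omega⟩
    have hS2 : S ∈ connSets k G₂ := hSk ▸ (⟨hcard, hconn1⟩ : S ∈ connSets k G₁)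
    obtain ⟨c, hc, hadj⟩ := exists_adj_of_connected hS2.2
      ((hmem t).mpr (Or.inr (Or.inr (Or.inr (Or.inl rfl))))) ((hmem u).mpr (Or.inl rfl)) htu
    rcases (hmem c).mp hc with rfl | rfl | rfl | rfl | hcW
    · exact hut2 hadj.symm
    · exact hxst2 hadj.symm
    · exact hn hadj.symm
    · exact G₂.irrefl hadj
    · exact hWB c hcW hadj
  · push_neg at hBcard
    obtain ⟨B', hB'sub, hB'card⟩ := Finset.exists_subset_card_eq
      (show k - 1 ≤ B.card from by omega)
    have hB'Z : B' ⊆ Z := hB'sub.trans hBsub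
    have htB' : t ∉ B' := fun h => htZ (hB'Z h)
    set S' : Finset V := insert t B' with hS'
    have hcard' : S'.card = k := by
      rw [hS', Finset.card_insert_of_notMem htB', hB'card]; omega
    have hmem' : ∀ x, x ∈ (S' : Set V) ↔ x = t ∨ x ∈ B' := by intro x; simp [hS']
    have hconn2 : (G₂.induce (S' : Set V)).Connected := by
      refine star_connected _ _ t ((hmem' t).mpr (Or.inl rfl)) ?_
      intro x hx hxt
      rcases (hmem' x).mp hx with rfl | hxB
      · exact absurd rfl hxt
      · exact (Finset.mem_filter.mp (hB'sub hxB)).2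
    have hS'1 : S' ∈ connSets k G₁ := hSk.symm ▸ (⟨hcard', hconn2⟩ : S' ∈ connSets k G₂)
    have hadj1 : ∀ b ∈ B', G₁.Adj t b := by
      intro b hb
      have hbt : b ≠ t := fun h => htB' (h ▸ hb)
      obtain ⟨c, hc, hadj⟩ := exists_adj_of_connected hS'1.2
        ((hmem' b).mpr (Or.inr hb)) ((hmem' t).mpr (Or.inl rfl)) hbt
      rcases (hmem' c).mp hc with rfl | hcB
      · exact hadj.symm
      · exact (tri_helper hfree₁ (hZ1 b (hB'Z hb)) (hZ1 c (hB'Z hcB)) hadj).elim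
    obtain ⟨B'', hB''sub, hB''card⟩ := Finset.exists_subset_card_eq
      (show k - 2 ≤ B'.card from by omega)
    have hB''B' : B'' ⊆ B' := hB''sub
    have hsB'' : s ∉ B'' := fun h => hsZ (hB'Z (hB''B' h))
    have htB'' : t ∉ B'' := fun h => htB' (hB''B' h)
    set S'' : Finset V := insert s (insert t B'') with hS''
    have hcard'' : S''.card = k := by
      rw [hS'', Finset.card_insert_of_notMem (by simp [hst', hsB'']),
        Finset.card_insert_of_notMem htB'', hB''card]
      omega
    have hmem'' : ∀ x, x ∈ (S'' : Set V) ↔ x = s ∨ x = t ∨ x ∈ B'' := by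
      intro x; simp [hS'']
    have hconn1 : (G₁.induce (S'' : Set V)).Connected := by
      refine star_connected _ _ t ((hmem'' t).mpr (Or.inr (Or.inl rfl))) ?_
      intro x hx hxt
      rcases (hmem'' x).mp hx with rfl | rfl | hxB
      · exact hst.symm
      · exact absurd rfl hxt
      · exact hadj1 x (hB''B' hxB)
    have hS''2 : S'' ∈ connSets k G₂ := hSk ▸ (⟨hcard'', hconn1⟩ : S'' ∈ connSets k G₁)
    obtain ⟨c, hc, hadj⟩ := exists_adj_of_connected hS''2.2
      ((hmem'' s).mpr (Or.inl rfl)) ((hmem'' t).mpr (Or.inr (Or.inl rfl))) hst'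
    rcases (hmem'' c).mp hc with rfl | rfl | hcB
    · exact G₂.irrefl hadj
    · exact hn hadj
    · have hc1 : G₁.Adj c s :=
        (hEdge c s (Or.inr (hZ1 c (hB'Z (hB''B' hcB))))).mpr hadj.symm
      exact tri_helper hfree₁ (hadj1 c (hB''B' hcB)) hst.symm hc1

theorem stmt9 {V : Type*} [Fintype V] [DecidableEq V] (k : ℕ) (hk : 2 ≤ k)
    (G₁ G₂ : SimpleGraph V)
    (hfree₁ : G₁.CliqueFree 3) (hfree₂ : G₂.CliqueFree 3)
    (hSk : connSets k G₁ = connSets k G₂)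
    (u : V) (Z : Finset V) (hZcard : Z.card = 2 * k - 4)
    (hZ : (Z : Set V) ⊆ G₁.neighborSet u ∩ G₂.neighborSet u) :
    G₁.neighborSet u = G₂.neighborSet u ∧
    setNbhd G₂ ({u} ∪ G₁.neighborSet u) = setNbhd G₁ ({u} ∪ G₁.neighborSet u) ∧
    (∀ s t : V, s ∈ ({u} : Set V) ∪ G₁.neighborSet u → (G₁.Adj s t ↔ G₂.Adj s t)) ∧
    (∀ s t : V, s ∈ setNbhd G₁ ({u} ∪ G₁.neighborSet u) →
      t ∈ setNbhd G₁ ({u} ∪ G₁.neighborSet u) → (G₁.Adj s t ↔ G₂.Adj s t)) := by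
  classical
  have hZ' : (Z : Set V) ⊆ G₂.neighborSet u ∩ G₁.neighborSet u :=
    fun x hx => ⟨(hZ hx).2, (hZ hx).1⟩
  have hX : G₁.neighborSet u = G₂.neighborSet u := by
    ext v
    simp only [SimpleGraph.mem_neighborSet]
    exact ⟨fun h => key1 k hk G₁ G₂ hfree₁ hSk u Z hZcard hZ h,
           fun h => key1 k hk G₂ G₁ hfree₂ hSk.symm u Z hZcard hZ' h⟩
  have part3 : ∀ s t : V, s ∈ ({u} : Set V) ∪ G₁.neighborSet u → (G₁.Adj s t ↔ G₂.Adj s t) := by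
    intro s t hsmem
    rcases hsmem with h1 | h2
    · have hsu : s = u := h1
      subst hsu
      exact ⟨fun h => key1 k hk G₁ G₂ hfree₁ hSk s Z hZcard hZ h,
             fun h => key1 k hk G₂ G₁ hfree₂ hSk.symm s Z hZcard hZ' h⟩
    · have hs1 : G₁.Adj u s := h2
      have hs2 : G₂.Adj u s := by
        have h : s ∈ G₂.neighborSet u := hX ▸ (h2 : s ∈ G₁.neighborSet u)
        exact h
      exact ⟨fun h => key2 k hk G₁ G₂ hfree₁ hfree₂ hSk u Z hZcard hZ hX hs1 h,
             fun h => key2 k hk G₂ G₁ hfree₂ hfree₁ hSk.symm u Z hZcard hZ' hX.symm hs2 h⟩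
  have part2 : setNbhd G₂ ({u} ∪ G₁.neighborSet u) = setNbhd G₁ ({u} ∪ G₁.neighborSet u) := by
    ext x
    constructor
    · rintro ⟨hx1, a, ha, hadj⟩
      exact ⟨hx1, a, ha, (part3 a x ha).mpr hadj⟩
    · rintro ⟨hx1, a, ha, hadj⟩
      exact ⟨hx1, a, ha, (part3 a x ha).mp hadj⟩
  refine ⟨hX, part2, part3, ?_⟩
  intro s t hsY htY
  have hEdge2 : ∀ a b : V, a ∈ ({u} : Set V) ∪ G₂.neighborSet u → (G₂.Adj a b ↔ G₁.Adj a b) := by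
    intro a b ha
    have ha' : a ∈ ({u} : Set V) ∪ G₁.neighborSet u := by rw [hX]; exact ha
    exact (part3 a b ha').symm
  have hsY2 : s ∈ setNbhd G₂ ({u} ∪ G₂.neighborSet u) := by
    rw [← hX, part2]; exact hsY
  have htY2 : t ∈ setNbhd G₂ ({u} ∪ G₂.neighborSet u) := by
    rw [← hX, part2]; exact htY
  exact ⟨fun h => key3 k hk G₁ G₂ hfree₁ hfree₂ hSk u Z hZcard hZ hX part3 hsY htY h,
         fun h => key3 k hk G₂ G₁ hfree₂ hfree₁ hSk.symm u Z hZcard hZ' hX.symm hEdge2 hsY2 htY2 h⟩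
end

section
/- Let k ≥ 2 be an integer, V a finite set, and C a family of k-element subsets of V. Let H = (E, E_N, E_U) be a partial graph on V and T ⊆ V such that T induces a connected subgraph of the graph (V, E), |T| ≥ k − 1, and N_H(T) ≠ ∅. Then there exists a partial supergraph H' of H such that (i) for every x ∈ V \ N_H[T] and every y ∈ N_H(T), the pair {x,y} does not belong to E_U(H'); and (ii) every simple graph G on V that is a supergraph of H with N_G(T) = N_H(T) and S_k(G) = C is a supergraph of H'. -/
/-- A partial graph on `V`: pairwise disjoint sets of known edges `E`, known
non-edges `EN` and unknown pairs `EU` whose union is the set of all unordered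
pairs of distinct vertices. -/
structure PartialGraph (V : Type*) where
  E : Set (Sym2 V)
  EN : Set (Sym2 V)
  EU : Set (Sym2 V)
  disjEEN : Disjoint E EN
  disjEEU : Disjoint E EU
  disjENEU : Disjoint EN EU
  cover : E ∪ EN ∪ EU = {e : Sym2 V | ¬ e.IsDiag}

/-- A simple graph `G` is a supergraph of a partial graph `H`. -/
def PartialGraph.Supergraph {V : Type*} (H : PartialGraph V) (G : SimpleGraph V) : Prop :=
  H.E ⊆ G.edgeSet ∧ Disjoint G.edgeSet H.EN

/-- `H'` is a partial supergraph of `H`. -/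
def PartialGraph.PartialSupergraph {V : Type*} (H H' : PartialGraph V) : Prop :=
  H.E ⊆ H'.E ∧ H.EN ⊆ H'.EN ∧ H'.EU ⊆ H.EU

/-- The open neighborhood `N_H(T)` of a set `T` in a partial graph `H`,
using only the known edges. -/
def PartialGraph.nbhd {V : Type*} (H : PartialGraph V) (T : Set V) : Set V :=
  {x | x ∉ T ∧ ∃ t ∈ T, s(t, x) ∈ H.E}

open SimpleGraph

lemma aux_induce_singleton_connected {V : Type*} (G : SimpleGraph V) (v : V) :
    (G.induce {v}).Connected := by
  rw [induce_singleton_eq_top]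
  have : Nonempty ({v} : Set V) := ⟨⟨v, rfl⟩⟩
  exact connected_top

lemma aux_induce_mono_conn {V : Type*} {G G' : SimpleGraph V} (h : G ≤ G') (s : Set V)
    (hc : (G.induce s).Connected) : (G'.induce s).Connected :=
  hc.mono (fun a b hab => h hab)

lemma aux_insert_connected {V : Type*} (G : SimpleGraph V) {s : Set V} {u v : V}
    (hc : (G.induce s).Connected) (hu : u ∈ s) (ha : G.Adj v u) :
    (G.induce (insert v s)).Connected := by
  have := connected_induce_union (G := G) (aux_induce_singleton_connected G v).preconnected hc.preconnected
    (Set.mem_singleton v) hu ha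
  rwa [Set.singleton_union] at this

lemma aux_exists_nbr {V : Type*} (G : SimpleGraph V) {s : Set V} {x y : V}
    (hc : (G.induce s).Connected) (hx : x ∈ s) (hy : y ∈ s) (hxy : x ≠ y) :
    ∃ z ∈ s, G.Adj x z := by
  obtain ⟨p⟩ := hc.preconnected ⟨x, hx⟩ ⟨y, hy⟩
  have hnn : ¬ p.Nil := SimpleGraph.Walk.not_nil_of_ne (by simp [Subtype.ext_iff, hxy])
  obtain ⟨u, h, q, _⟩ := SimpleGraph.Walk.not_nil_iff.mp hnn
  exact ⟨↑u, u.2, h⟩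

lemma aux_grow {V : Type*} [Fintype V] [DecidableEq V] (G : SimpleGraph V) {T : Set V}
    (hT : (G.induce T).Connected) (s : Finset V) (hs : ↑s ⊆ T) (hne : s.Nonempty)
    (hconn : (G.induce (s : Set V)).Connected) (hlt : s.card < T.ncard) :
    ∃ v ∈ T, v ∉ s ∧ (G.induce ((insert v s : Finset V) : Set V)).Connected := by
  have hTfin : T.Finite := Set.toFinite T
  obtain ⟨v0, hv0T, hv0s⟩ : ∃ v0 ∈ T, v0 ∉ s := by
    by_contra hcon
    push_neg at hcon
    have hsub : T ⊆ ↑s := fun a ha => hcon a ha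
    have := Set.ncard_le_ncard hsub (s.finite_toSet)
    simp [Set.ncard_coe_finset] at this
    omega
  obtain ⟨u, hu⟩ := hne
  obtain ⟨p⟩ := hT.preconnected ⟨u, hs hu⟩ ⟨v0, hv0T⟩
  obtain ⟨d, _, hd1, hd2⟩ := p.exists_boundary_dart {w : T | (w : V) ∈ s} hu hv0s
  refine ⟨↑d.snd, d.snd.2, hd2, ?_⟩
  rw [Finset.coe_insert]
  exact aux_insert_connected G hconn hd1 d.adj.symm

lemma aux_grow_to {V : Type*} [Fintype V] [DecidableEq V] (G : SimpleGraph V) {T : Set V}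
    (hT : (G.induce T).Connected) {t : V} (ht : t ∈ T) :
    ∀ m, 1 ≤ m → m ≤ T.ncard → ∃ s : Finset V, ↑s ⊆ T ∧ t ∈ s ∧ s.card = m ∧
      (G.induce (s : Set V)).Connected := by
  intro m
  induction m with
  | zero => omega
  | succ n ih =>
    intro _ hle
    rcases Nat.eq_or_lt_of_le (Nat.one_le_iff_ne_zero.mpr (by omega) : 1 ≤ n + 1) with h1 | h1
    · refine ⟨{t}, by simpa using ht, Finset.mem_singleton_self t,
        by rw [Finset.card_singleton]; omega, ?_⟩
      rw [Finset.coe_singleton]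
      exact aux_induce_singleton_connected G t
    · have hn1 : 1 ≤ n := by omega
      obtain ⟨s, hsT, hts, hcard, hconn⟩ := ih hn1 (by omega)
      obtain ⟨v, hvT, hvs, hconn'⟩ := aux_grow G hT s hsT ⟨t, hts⟩ hconn (by omega)
      exact ⟨insert v s, by rw [Finset.coe_insert]; exact Set.insert_subset hvT hsT,
        Finset.mem_insert_of_mem hts, by rw [Finset.card_insert_of_notMem hvs]; omega, hconn'⟩

theorem stmt10 {V : Type*} [Fintype V] [DecidableEq V] (k : ℕ) (hk : 2 ≤ k)
    (C : Set (Finset V)) (hC : ∀ S ∈ C, S.card = k)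
    (H : PartialGraph V) (T : Set V)
    (hTconn : ((SimpleGraph.fromEdgeSet H.E).induce T).Connected)
    (hTcard : k - 1 ≤ T.ncard)
    (hN : (H.nbhd T).Nonempty) :
    ∃ H' : PartialGraph V, H.PartialSupergraph H' ∧
      (∀ x ∉ T ∪ H.nbhd T, ∀ y ∈ H.nbhd T, s(x, y) ∉ H'.EU) ∧
      (∀ G : SimpleGraph V, H.Supergraph G → setNbhd G T = H.nbhd T →
        connSets k G = C → H'.Supergraph G) := by
  classical
  set N := H.nbhd T with hNdef
  set F := SimpleGraph.fromEdgeSet H.E with hFdef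
  -- choose the auxiliary connected sets
  have hBex : ∀ y : V, ∃ B : Finset V, y ∈ N → ((B : Set V) ⊆ T ∧ B.card = k - 2 ∧
      (F.induce (insert y (B : Set V))).Connected) := by
    intro y
    by_cases hy : y ∈ N
    · obtain ⟨hyT, t, htT, hte⟩ := hy
      rcases Nat.lt_or_ge k 3 with hk3 | hk3
      · refine ⟨∅, fun _ => ⟨by simp, by rw [Finset.card_empty]; omega, ?_⟩⟩
        have hset : insert y ((∅ : Finset V) : Set V) = {y} := by simp
        rw [hset]
        exact aux_induce_singleton_connected F y
      · obtain ⟨s, hsT, hts, hcard, hconn⟩ :=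
          aux_grow_to F hTconn htT (k - 2) (by omega) (by omega)
        refine ⟨s, fun _ => ⟨hsT, hcard, ?_⟩⟩
        have hty : F.Adj y t := by
          rw [hFdef, SimpleGraph.fromEdgeSet_adj]
          exact ⟨by rwa [Sym2.eq_swap], fun h => hyT (h ▸ htT)⟩
        exact aux_insert_connected F hconn hts hty
    · exact ⟨∅, fun h => absurd h hy⟩
  choose B hB using hBex
  have huniq : ∀ x y x' y' : V, x ∉ T ∪ N → y ∈ N → x' ∉ T ∪ N → y' ∈ N →
      s(x, y) = s(x', y') → x = x' ∧ y = y' := by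
    intro x y x' y' hx hy hx' hy' he
    rw [Sym2.eq_iff] at he
    rcases he with ⟨rfl, rfl⟩ | ⟨rfl, rfl⟩
    · exact ⟨rfl, rfl⟩
    · exact absurd (Set.mem_union_right T hy') hx
  set D1 : Set (Sym2 V) := {e | e ∈ H.EU ∧ ∃ x y, e = s(x, y) ∧ x ∉ T ∪ N ∧ y ∈ N ∧
    insert x (insert y (B y)) ∈ C} with hD1def
  set D2 : Set (Sym2 V) := {e | e ∈ H.EU ∧ ∃ x y, e = s(x, y) ∧ x ∉ T ∪ N ∧ y ∈ N ∧
    insert x (insert y (B y)) ∉ C} with hD2def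
  have hD1sub : D1 ⊆ H.EU := fun e he => he.1
  have hD2sub : D2 ⊆ H.EU := fun e he => he.1
  have hD12 : Disjoint D1 D2 := by
    rw [Set.disjoint_left]
    rintro e ⟨_, x, y, rfl, hx, hy, hin⟩ ⟨_, x', y', heq, hx', hy', hnin⟩
    obtain ⟨rfl, rfl⟩ := huniq x y x' y' hx hy hx' hy' heq
    exact hnin hin
  refine ⟨⟨H.E ∪ D1, H.EN ∪ D2, H.EU \ (D1 ∪ D2), ?_, ?_, ?_, ?_⟩,
    ⟨Set.subset_union_left, Set.subset_union_left, Set.diff_subset⟩, ?_, ?_⟩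
  · rw [Set.disjoint_union_right, Set.disjoint_union_left, Set.disjoint_union_left]
    exact ⟨⟨H.disjEEN, (H.disjENEU.symm).mono_left hD1sub⟩,
      ⟨H.disjEEU.mono_right hD2sub, hD12⟩⟩
  · rw [Set.disjoint_union_left]
    refine ⟨H.disjEEU.mono_right Set.diff_subset, Set.disjoint_left.mpr ?_⟩
    intro e he1 he2
    exact he2.2 (Or.inl he1)
  · rw [Set.disjoint_union_left]
    refine ⟨H.disjENEU.mono_right Set.diff_subset, Set.disjoint_left.mpr ?_⟩
    intro e he1 he2
    exact he2.2 (Or.inr he1)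
  · have hcov : H.E ∪ D1 ∪ (H.EN ∪ D2) ∪ (H.EU \ (D1 ∪ D2)) = H.E ∪ H.EN ∪ H.EU := by
      ext e
      have h1 := @hD1sub e
      have h2 := @hD2sub e
      simp only [Set.mem_union, Set.mem_diff]
      tauto
    rw [hcov, H.cover]
  · -- condition (i)
    intro x hx y hy he
    by_cases hc' : insert x (insert y (B y)) ∈ C
    · exact he.2 (Or.inl ⟨he.1, x, y, rfl, hx, hy, hc'⟩)
    · exact he.2 (Or.inr ⟨he.1, x, y, rfl, hx, hy, hc'⟩)
  · -- condition (ii)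
    intro G hGsup hnb hcs
    have hFG : F ≤ G := by
      intro a b hab
      rw [hFdef, SimpleGraph.fromEdgeSet_adj] at hab
      exact (G.mem_edgeSet).mp (hGsup.1 hab.1)
    have key : ∀ x y : V, x ∉ T ∪ N → y ∈ N →
        (G.Adj x y ↔ insert x (insert y (B y)) ∈ C) := by
      intro x y hx hy
      obtain ⟨hBT, hBcard, hBconn⟩ := hB y hy
      have hxT : x ∉ T := fun h => hx (Or.inl h)
      have hxy : x ≠ y := fun h => hx (Or.inr (h ▸ hy))
      have hxB : x ∉ B y := fun h => hx (Or.inl (hBT h))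
      have hyB : y ∉ B y := fun h => hy.1 (hBT h)
      have hcoe : ((insert x (insert y (B y)) : Finset V) : Set V)
          = insert x (insert y ((B y : Finset V) : Set V)) := by
        simp [Finset.coe_insert]
      have hcard : (insert x (insert y (B y))).card = k := by
        rw [Finset.card_insert_of_notMem (by simp [Finset.mem_insert, hxy, hxB]),
          Finset.card_insert_of_notMem hyB, hBcard]
        omega
      constructor
      · intro hadj
        rw [← hcs]
        refine ⟨hcard, ?_⟩
        rw [hcoe]
        exact aux_insert_connected G
          (aux_induce_mono_conn hFG _ hBconn) (Set.mem_insert y _) hadj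
      · intro hmem
        rw [← hcs] at hmem
        obtain ⟨_, hconn⟩ := hmem
        have hxS : x ∈ ((insert x (insert y (B y)) : Finset V) : Set V) := by simp
        have hyS : y ∈ ((insert x (insert y (B y)) : Finset V) : Set V) := by simp
        obtain ⟨z, hz, hadj⟩ := aux_exists_nbr G hconn hxS hyS hxy
        rw [hcoe] at hz
        rcases hz with rfl | rfl | hz
        · exact absurd rfl hadj.ne
        · exact hadj
        · exfalso
          have : x ∈ setNbhd G T := ⟨hxT, z, hBT hz, hadj.symm⟩
          rw [hnb] at this
          exact hx (Or.inr this)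
    constructor
    · intro e he
      rcases he with he | ⟨_, x, y, rfl, hx, hy, hCmem⟩
      · exact hGsup.1 he
      · exact (G.mem_edgeSet).mpr ((key x y hx hy).mpr hCmem)
    · rw [Set.disjoint_union_right]
      refine ⟨hGsup.2, Set.disjoint_left.mpr ?_⟩
      rintro e heG ⟨_, x, y, rfl, hx, hy, hCnot⟩
      exact hCnot ((key x y hx hy).mp ((G.mem_edgeSet).mp heG))
end

section
/- Let k ≥ 2 be an integer, V a finite set, and C a family of k-element subsets of V. Let H = (E, E_N, E_U) be a partial graph on V and T ⊆ V such that T induces a connected subgraph of the graph (V, E), |T| ≥ k − 1, and N_H(T) ≠ ∅. Suppose moreover that there exists at least one connected simple graph G₀ on V that is a supergraph of H with N_{G₀}(T) = N_H(T) and S_k(G₀) = C. Then there exist a partial supergraph H' of H and a partition V = L₀ ∪ L₁ ∪ … ∪ L_ℓ with L₀ = T such that: (i) for all 0 ≤ i < j ≤ ℓ with (i,j) ≠ (0,1) and all x ∈ L_i, y ∈ L_j, the pair {x,y} does not belong to E_U(H'); (ii) for each 0 ≤ i ≤ ℓ, L_i is exactly the set of vertices x ∈ V for which the minimum over t ∈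 T of the graph distance between x and t in the graph (V, E(H')) equals i; and (iii) every simple graph G on V that is a supergraph of H with N_G(T) = N_H(T) and S_k(G) = C is a supergraph of H'. -/
/-- The distance (in `ℕ∞`) from a vertex `x` to a set `T` in a graph `G`:
the minimum over `t ∈ T` of the length of a shortest walk from `x` to `t`
(`⊤` if no vertex of `T` is reachable from `x`). -/
noncomputable def distToSet {V : Type*} (G : SimpleGraph V) (T : Set V) (x : V) : ℕ∞ :=
  ⨅ t ∈ T, ⨅ w : G.Walk x t, (w.length : ℕ∞)

namespace Stmt11Aux

variable {V : Type*} [Fintype V] [DecidableEq V]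

def Fam (k : ℕ) (C : Set (Finset V)) (H : PartialGraph V) (T : Set V) :
    Set (SimpleGraph V) :=
  {G | H.Supergraph G ∧ setNbhd G T = H.nbhd T ∧ connSets k G = C}

def KE (k : ℕ) (C : Set (Finset V)) (H : PartialGraph V) (T : Set V) : Set (Sym2 V) :=
  ⋂ G ∈ Fam k C H T, G.edgeSet

def KG (k : ℕ) (C : Set (Finset V)) (H : PartialGraph V) (T : Set V) : SimpleGraph V :=
  SimpleGraph.fromEdgeSet (KE k C H T)

variable {k : ℕ} {C : Set (Finset V)} {H : PartialGraph V} {T : Set V}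

lemma KG_le {G : SimpleGraph V} (hG : G ∈ Fam k C H T) : KG k C H T ≤ G := by
  intro a b hab
  rw [KG, SimpleGraph.fromEdgeSet_adj] at hab
  exact (SimpleGraph.mem_edgeSet G).mp (Set.mem_iInter₂.mp hab.1 G hG)

lemma HE_le {G : SimpleGraph V} (hG : G ∈ Fam k C H T) :
    SimpleGraph.fromEdgeSet H.E ≤ G := by
  intro a b hab
  rw [SimpleGraph.fromEdgeSet_adj] at hab
  exact (SimpleGraph.mem_edgeSet G).mp (hG.1.1 hab.1)

end Stmt11Aux

namespace DTS
variable {V : Type*} {G G' : SimpleGraph V} {T : Set V} {x y : V}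

lemma le_of_walk {t : V} (ht : t ∈ T) (w : G.Walk x t) :
    distToSet G T x ≤ w.length := by
  refine le_trans (iInf₂_le t ht) (iInf_le _ w)

lemma of_mem (hx : x ∈ T) : distToSet G T x = 0 := by
  refine le_antisymm ?_ zero_le
  have := le_of_walk (G := G) hx (SimpleGraph.Walk.nil)
  simpa using this

lemma exists_le {n : ℕ} (h : distToSet G T x ≤ n) :
    ∃ t ∈ T, ∃ w : G.Walk x t, w.length ≤ n := by
  by_contra hc
  push_neg at hc
  have : (n : ℕ∞) + 1 ≤ distToSet G T x := by
    refine le_iInf₂ fun t ht => le_iInf fun w => ?_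
    have := hc t ht w
    rw [show ((n:ℕ∞)+1) = ((n+1 : ℕ) : ℕ∞) by push_cast; ring]
    exact_mod_cast this
  have h2 : (n : ℕ∞) + 1 ≤ n := this.trans h
  simp [ENat.add_one_le_iff] at h2

lemma exists_eq {n : ℕ} (h : distToSet G T x = n) :
    ∃ t ∈ T, ∃ w : G.Walk x t, w.length = n := by
  obtain ⟨t, ht, w, hw⟩ := exists_le h.le
  refine ⟨t, ht, w, le_antisymm hw ?_⟩
  have := le_of_walk (G := G) ht w
  rw [h] at this
  exact_mod_cast this

lemma mem_of_eq_zero (h : distToSet G T x = 0) : x ∈ T := by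
  obtain ⟨t, ht, w, hw⟩ := exists_eq (n := 0) (by simpa using h)
  rwa [SimpleGraph.Walk.eq_of_length_eq_zero hw]

lemma le_adj (h : G.Adj x y) : distToSet G T x ≤ distToSet G T y + 1 := by
  rcases eq_or_ne (distToSet G T y) ⊤ with h' | h'
  · simp [h']
  · lift distToSet G T y to ℕ using h' with n hn
    rw [eq_comm] at hn
    obtain ⟨t, ht, w, hw⟩ := exists_eq hn
    have := le_of_walk (T := T) ht (SimpleGraph.Walk.cons h w)
    simpa [hw, add_comm] using this

lemma mono (hle : G ≤ G') : distToSet G' T x ≤ distToSet G T x := by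
  rcases eq_or_ne (distToSet G T x) ⊤ with h' | h'
  · simp [h']
  · lift distToSet G T x to ℕ using h' with n hn
    rw [eq_comm] at hn
    obtain ⟨t, ht, w, hw⟩ := exists_eq hn
    have := le_of_walk (T := T) ht (w.mapLe hle)
    simpa [hw] using this

lemma exists_adj {n : ℕ} (h : distToSet G T x = n + 1) :
    ∃ y, G.Adj x y ∧ distToSet G T y = n := by
  obtain ⟨t, ht, w, hw⟩ := exists_eq h
  cases w with
  | nil => simp at hw
  | cons hadj w' =>
    rename_i y
    refine ⟨y, hadj, ?_⟩
    simp only [SimpleGraph.Walk.length_cons, Nat.add_right_cancel_iff] at hw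
    refine le_antisymm (by simpa [hw] using le_of_walk ht w') ?_
    by_contra hc
    push_neg at hc
    have h1 := le_adj (T := T) hadj
    rw [h] at h1
    have h2 : distToSet G T y + 1 < (n : ℕ∞) + 1 :=
      WithTop.add_lt_add_right ENat.one_ne_top hc
    exact absurd (h1.trans_lt h2) (lt_irrefl _)

end DTS
namespace CH
open SimpleGraph
variable {V : Type*} {G G' : SimpleGraph V} {A : Set V} {a v y z : V}

lemma induce_mono_graph (hle : G ≤ G') (h : (G.induce A).Connected) :
    (G'.induce A).Connected :=
  h.mono (fun {a b} hab => hle hab)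

lemma induce_singleton : (G.induce {v}).Connected := by
  rw [SimpleGraph.connected_iff]
  refine ⟨fun a b => ?_, ⟨⟨v, rfl⟩⟩⟩
  obtain rfl : a = b := Subtype.ext (by rw [a.2, b.2])
  exact Reachable.refl _

lemma pendant (h : (G.induce A).Connected) (ha : a ∈ A) (hadj : G.Adj a v) :
    (G.induce (insert v A)).Connected := by
  have h2 := G.connected_induce_union (s := A) (t := {v}) h.preconnected
    (induce_singleton (G := G)).preconnected ha rfl hadj
  have hs : A ∪ {v} = insert v A := by ext z; simp [or_comm]
  rwa [hs] at h2

lemma exists_adj_of_connected (h : (G.induce A).Connected) (hy : y ∈ A) (hz : z ∈ A)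
    (hne : z ≠ y) : ∃ b ∈ A, G.Adj y b := by
  obtain ⟨w⟩ := h.preconnected ⟨y, hy⟩ ⟨z, hz⟩
  cases w with
  | nil => exact absurd rfl hne
  | cons hadj w' =>
    rename_i b
    exact ⟨b.1, b.2, hadj⟩

end CH

namespace CH2
open SimpleGraph
variable {V : Type*} [DecidableEq V] {G : SimpleGraph V} {A : Set V}

lemma exists_boundary (T' : Finset V) :
    ∀ {b a : ↥A} (_ : (G.induce A).Walk b a), ↑b ∉ T' → ↑a ∈ T' →
    ∃ u v : V, u ∈ T' ∧ v ∈ A ∧ v ∉ T' ∧ G.Adj u v := by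
  intro b a w
  induction w with
  | nil => intro hb ha; exact absurd ha hb
  | @cons b' c' a' hadj' w' ih =>
    intro hb ha
    by_cases hc : ↑c' ∈ T'
    · exact ⟨c', b', hc, b'.2, hb, (hadj'.symm : G.Adj c'.1 b'.1)⟩
    · exact ih hc ha

lemma exists_conn_subset (hconn : (G.induce A).Connected) {t : V} (ht : t ∈ A)
    (hfin : A.Finite) (m : ℕ) (hm : m + 1 ≤ A.ncard) :
    ∃ T' : Finset V, ↑T' ⊆ A ∧ t ∈ T' ∧ T'.card = m + 1 ∧
      (G.induce (T' : Set V)).Connected := by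
  induction m with
  | zero =>
    refine ⟨{t}, by simpa using ht, by simp, by simp, ?_⟩
    rw [Finset.coe_singleton]
    exact CH.induce_singleton (G := G) (v := t)
  | succ m ih =>
    obtain ⟨T', hsub, htT, hcard, hc⟩ := ih (by omega)
    have hex : ∃ b ∈ A, b ∉ T' := by
      by_contra hno
      push_neg at hno
      have hAT : A ⊆ ↑T' := fun b hb => hno b hb
      have := Set.ncard_le_ncard hAT (T' : Set V).toFinite
      rw [Set.ncard_coe_finset] at this
      omega
    obtain ⟨b, hbA, hbT⟩ := hex
    obtain ⟨w⟩ := hconn.preconnected ⟨b, hbA⟩ ⟨t, ht⟩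
    obtain ⟨u, v, huT, hvA, hvT, huv⟩ := exists_boundary T' w hbT htT
    refine ⟨insert v T', ?_, Finset.mem_insert_of_mem htT, ?_, ?_⟩
    · intro z hz
      rcases Finset.mem_insert.mp hz with rfl | hz
      · exact hvA
      · exact hsub hz
    · rw [Finset.card_insert_of_notMem hvT, hcard]
    · have := CH.pendant hc huT huv
      rwa [show (insert v (T' : Set V)) = ((insert v T' : Finset V) : Set V) by simp] at this

end CH2

namespace Stmt11Aux
variable {V : Type*} [Fintype V] [DecidableEq V]
variable {k : ℕ} {C : Set (Finset V)} {H : PartialGraph V} {T : Set V}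

/-- growing a connected base along a chain -/
lemma chain_conn (G' : SimpleGraph V) (B0 : Finset V)
    (hB0 : (G'.induce (B0 : Set V)).Connected) (p : ℕ → V) (a : ℕ) (hpa : p a ∈ B0) :
    ∀ n, a ≤ n → (∀ m, a ≤ m → m + 1 ≤ n → G'.Adj (p m) (p (m + 1))) →
    (G'.induce ((B0 ∪ Finset.image p (Finset.Icc a n) : Finset V) : Set V)).Connected := by
  intro n
  induction n with
  | zero =>
    intro ha _
    interval_cases a
    have : B0 ∪ Finset.image p (Finset.Icc 0 0) = B0 := by
      simp [Finset.union_eq_left, Finset.subset_iff, hpa]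
    rw [this]; exact hB0
  | succ n ih =>
    intro ha hadj
    rcases Nat.lt_or_ge n.succ a with hlt | hge
    · omega
    rcases Nat.lt_or_ge n a with hlt | hge'
    · -- a = n+1
      have haeq : a = n + 1 := by omega
      subst haeq
      have : B0 ∪ Finset.image p (Finset.Icc (n+1) (n+1)) = B0 := by
        simp [Finset.union_eq_left, Finset.subset_iff, hpa]
      rw [this]; exact hB0
    · have ihc := ih hge' (fun m hm hm' => hadj m hm (by omega))
      have hmem : p n ∈ (B0 ∪ Finset.image p (Finset.Icc a n) : Finset V) := by
        simp only [Finset.mem_union, Finset.mem_image]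
        exact Or.inr ⟨n, by simp [Finset.mem_Icc, hge'], rfl⟩
      have hp := CH.pendant (A := ((B0 ∪ Finset.image p (Finset.Icc a n) : Finset V) : Set V))
        ihc hmem (hadj n hge' (by omega))
      have hset : insert (p (n+1)) ((B0 ∪ Finset.image p (Finset.Icc a n) : Finset V) : Set V)
          = ((B0 ∪ Finset.image p (Finset.Icc a (n+1)) : Finset V) : Set V) := by
        have : Finset.Icc a (n+1) = insert (n+1) (Finset.Icc a n) := by
          ext m; simp [Finset.mem_Icc, Finset.mem_insert]; omega
        rw [this, Finset.image_insert]
        ext z; simp; try tauto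
      rwa [hset] at hp

/-- distances along a KG-chain -/
lemma dG_chain_le {G' : SimpleGraph V} (hle : KG k C H T ≤ G') (p : ℕ → V) (j : ℕ)
    (hp0 : p 0 ∈ T)
    (hpadj : ∀ m, m + 1 ≤ j → (KG k C H T).Adj (p m) (p (m + 1))) :
    ∀ m, m ≤ j → distToSet G' T (p m) ≤ m := by
  intro m
  induction m with
  | zero => intro _; simp [DTS.of_mem hp0]
  | succ m ih =>
    intro hm
    have h1 := DTS.le_adj (T := T) (hle (hpadj m hm).symm)
    have h2 := ih (by omega)
    calc distToSet G' T (p (m+1)) ≤ distToSet G' T (p m) + 1 := h1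
      _ ≤ (m : ℕ∞) + 1 := by exact add_le_add_left h2 1
      _ = ((m+1 : ℕ) : ℕ∞) := by push_cast; ring

lemma key_equiv (hk : 2 ≤ k)
    (x y : V) (B : Finset V) (hxB : x ∈ B) (hyB : y ∉ B) (hcard : B.card = k - 1)
    (hconn : ∀ G' ∈ Fam k C H T, (G'.induce (B : Set V)).Connected)
    (hnadj : ∀ G' ∈ Fam k C H T, ∀ b ∈ B, b ≠ x → ¬ G'.Adj y b)
    {G' : SimpleGraph V} (hG' : G' ∈ Fam k C H T) :
    (G'.Adj x y ↔ insert y B ∈ C) := by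
  have hxy : x ≠ y := fun h => hyB (h ▸ hxB)
  constructor
  · intro hadj
    have hc2 : (G'.induce ((insert y B : Finset V) : Set V)).Connected := by
      have := CH.pendant (hconn G' hG') hxB hadj
      rwa [show (insert y (B : Set V)) = ((insert y B : Finset V) : Set V) by simp] at this
    have hc1 : (insert y B).card = k := by
      rw [Finset.card_insert_of_notMem hyB, hcard]; omega
    rw [← hG'.2.2]
    exact ⟨hc1, hc2⟩
  · intro hS
    rw [← hG'.2.2] at hS
    obtain ⟨-, hc⟩ := hS
    obtain ⟨b, hb, hadj⟩ := CH.exists_adj_of_connected hc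
      (by simp : y ∈ ((insert y B : Finset V) : Set V))
      (by simp [hxB] : x ∈ ((insert y B : Finset V) : Set V)) hxy
    have hbB : b ∈ B := by
      have := hadj.ne
      simp only [Finset.coe_insert, Set.mem_insert_iff] at hb
      rcases hb with rfl | hb
      · exact absurd rfl this
      · exact_mod_cast hb
    by_cases hbx : b = x
    · subst hbx; exact hadj.symm
    · exact absurd hadj (hnadj G' hG' b hbB hbx)

lemma crit (hk : 2 ≤ k)
    (hTconn : ((SimpleGraph.fromEdgeSet H.E).induce T).Connected)
    (hTcard : k - 1 ≤ T.ncard) {G₀ : SimpleGraph V} (hG₀mem : G₀ ∈ Fam k C H T)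
    (j : ℕ) (hj : 1 ≤ j) (x y : V) (p : ℕ → V) (hpx : p j = x)
    (hp : ∀ m, m ≤ j → distToSet G₀ T (p m) = m)
    (hpadj : ∀ m, m + 1 ≤ j → (KG k C H T).Adj (p m) (p (m + 1)))
    (hy : (j : ℕ∞) < distToSet G₀ T y)
    (hAj : ∀ G ∈ Fam k C H T, (distToSet G T y ≤ (j : ℕ∞) ↔ distToSet G₀ T y ≤ (j : ℕ∞)))
    {G : SimpleGraph V} (hG : G ∈ Fam k C H T) : (G.Adj x y ↔ G₀.Adj x y) := by
  have hp0T : p 0 ∈ T := DTS.mem_of_eq_zero (by simpa using hp 0 (by omega))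
  have hyT : y ∉ T := by
    intro hyT
    rw [DTS.of_mem hyT] at hy
    simp at hy
  have hyd : ¬ distToSet G₀ T y ≤ (j : ℕ∞) := not_le.mpr hy
  have h1j : (1 : ℕ∞) ≤ (j : ℕ∞) := by exact_mod_cast hj
  have hynotN : ∀ G' ∈ Fam k C H T, ∀ t ∈ T, ¬ G'.Adj t y := by
    intro G' hG' t ht hadj
    have hyN : y ∈ setNbhd G' T := ⟨hyT, t, ht, hadj⟩
    rw [hG'.2.1, ← hG₀mem.2.1] at hyN
    obtain ⟨-, t', ht', hadj'⟩ := hyN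
    have := DTS.le_adj (T := T) hadj'.symm
    rw [DTS.of_mem ht'] at this
    exact hyd (this.trans (by simpa using h1j))
  have hdist : ∀ G' ∈ Fam k C H T, ∀ m, m ≤ j → distToSet G' T (p m) ≤ m :=
    fun G' hG' => dG_chain_le (KG_le hG') p j hp0T hpadj
  have hpinj : ∀ m ≤ j, ∀ m' ≤ j, p m = p m' → m = m' := by
    intro m hm m' hm' he
    have h1 := hp m hm
    have h2 := hp m' hm'
    rw [he, h2] at h1
    exact_mod_cast h1.symm
  have hyp : ∀ m, m ≤ j → y ≠ p m := by
    intro m hm he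
    have := hp m hm
    rw [← he] at this
    exact hyd (this.le.trans (by exact_mod_cast hm))
  -- common: given B with needed props, conclude
  have main : ∀ B : Finset V, x ∈ B → y ∉ B → B.card = k - 1 →
      ((B : Set V) ⊆ {z | z ∈ T ∨ ∃ m, m ≤ j ∧ z = p m}) →
      (∀ G' ∈ Fam k C H T, (G'.induce (B : Set V)).Connected) →
      (G.Adj x y ↔ G₀.Adj x y) := by
    intro B hxB hyB hcard hBsub hconn
    have hnadj : ∀ G' ∈ Fam k C H T, ∀ b ∈ B, b ≠ x → ¬ G'.Adj y b := by
      intro G' hG' b hbB hbx hadj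
      rcases hBsub hbB with hbT | ⟨m, hm, rfl⟩
      · exact hynotN G' hG' b hbT hadj.symm
      · have hmj : m < j := by
          rcases Nat.lt_or_ge m j with h | h
          · exact h
          · have : m = j := by omega
            exact absurd (by rw [this, hpx] : p m = x) hbx
        have hd := DTS.le_adj (T := T) hadj
        have hd2 := hdist G' hG' m hm
        have hle : distToSet G' T y ≤ (j : ℕ∞) := by
          calc distToSet G' T y ≤ distToSet G' T (p m) + 1 := hd
            _ ≤ (m : ℕ∞) + 1 := add_le_add_left hd2 1
            _ = ((m + 1 : ℕ) : ℕ∞) := by push_cast; ring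
            _ ≤ (j : ℕ∞) := by exact_mod_cast hmj
        exact hyd ((hAj G' hG').mp hle)
    exact (key_equiv hk x y B hxB hyB hcard hconn hnadj hG).trans
      (key_equiv hk x y B hxB hyB hcard hconn hnadj hG₀mem).symm
  rcases Nat.lt_or_ge j (k - 1) with hcase | hcase
  · -- j ≤ k - 2 : use a connected subset of T plus the chain
    obtain ⟨T', hT'sub, hT'mem, hT'card, hT'conn⟩ :=
      CH2.exists_conn_subset hTconn hp0T (Set.toFinite T) (k - 1 - j - 1) (by omega)
    set B : Finset V := T' ∪ Finset.image p (Finset.Icc 0 j) with hB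
    have hinter : T' ∩ Finset.image p (Finset.Icc 0 j) = {p 0} := by
      ext z
      simp only [Finset.mem_inter, Finset.mem_image, Finset.mem_Icc, Finset.mem_singleton]
      constructor
      · rintro ⟨hzT', ⟨m, ⟨-, hmj⟩, rfl⟩⟩
        have hz0 : distToSet G₀ T (p m) = 0 := DTS.of_mem (hT'sub hzT')
        rw [hp m hmj] at hz0
        have : m = 0 := by exact_mod_cast hz0
        rw [this]
      · rintro rfl
        exact ⟨hT'mem, 0, ⟨le_rfl, by omega⟩, rfl⟩
    refine main B ?_ ?_ ?_ ?_ ?_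
    · exact Finset.mem_union_right _ (Finset.mem_image.mpr ⟨j, by simp, hpx⟩)
    · intro hyB
      rcases Finset.mem_union.mp hyB with h | h
      · exact hyT (hT'sub h)
      · obtain ⟨m, hm, he⟩ := Finset.mem_image.mp h
        exact hyp m (Finset.mem_Icc.mp hm).2 he.symm
    · have himg : (Finset.image p (Finset.Icc 0 j)).card = j + 1 := by
        rw [Finset.card_image_of_injOn, Nat.card_Icc]
        · omega
        · intro m hm m' hm' he
          exact hpinj m (Finset.mem_Icc.mp (Finset.mem_coe.mp hm)).2
            m' (Finset.mem_Icc.mp (Finset.mem_coe.mp hm')).2 he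
      have := Finset.card_union_add_card_inter T' (Finset.image p (Finset.Icc 0 j))
      rw [hinter, himg, hT'card] at this
      simp only [Finset.card_singleton] at this
      rw [← hB] at this
      omega
    · intro z hz
      rcases Finset.mem_union.mp (Finset.mem_coe.mp hz) with h | h
      · exact Or.inl (hT'sub h)
      · obtain ⟨m, hm, he⟩ := Finset.mem_image.mp h
        exact Or.inr ⟨m, (Finset.mem_Icc.mp hm).2, he.symm⟩
    · intro G' hG'
      have hT'connG' : (G'.induce (T' : Set V)).Connected :=
        CH.induce_mono_graph (HE_le hG') hT'conn
      exact chain_conn G' T' hT'connG' p 0 hT'mem j (by omega)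
        (fun m _ hm' => KG_le hG' (hpadj m hm'))
  · -- j ≥ k - 1 : use only the tail of the chain
    set a : ℕ := j - (k - 2) with ha
    set B : Finset V := Finset.image p (Finset.Icc a j) with hB
    have hBeq : ({p a} : Finset V) ∪ Finset.image p (Finset.Icc a j) = B := by
      rw [hB, Finset.union_eq_right]
      intro z hz
      rw [Finset.mem_singleton] at hz
      exact Finset.mem_image.mpr ⟨a, by simp [Finset.mem_Icc]; omega, hz ▸ rfl⟩
    refine main B ?_ ?_ ?_ ?_ ?_
    · exact Finset.mem_image.mpr ⟨j, by simp [Finset.mem_Icc]; omega, hpx⟩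
    · intro hyB
      obtain ⟨m, hm, he⟩ := Finset.mem_image.mp hyB
      exact hyp m (Finset.mem_Icc.mp hm).2 he.symm
    · rw [hB, Finset.card_image_of_injOn, Nat.card_Icc]
      · omega
      · intro m hm m' hm' he
        exact hpinj m (Finset.mem_Icc.mp (Finset.mem_coe.mp hm)).2
          m' (Finset.mem_Icc.mp (Finset.mem_coe.mp hm')).2 he
    · intro z hz
      obtain ⟨m, hm, he⟩ := Finset.mem_image.mp (Finset.mem_coe.mp hz)
      exact Or.inr ⟨m, (Finset.mem_Icc.mp hm).2, he.symm⟩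
    · intro G' hG'
      have hsing : (G'.induce (({p a} : Finset V) : Set V)).Connected := by
        rw [Finset.coe_singleton]
        exact CH.induce_singleton
      have := chain_conn G' {p a} hsing p a (Finset.mem_singleton_self _) j (by omega)
        (fun m _ hm' => KG_le hG' (hpadj m hm'))
      rwa [hBeq] at this

lemma HE_subset_KE : H.E ⊆ KE k C H T :=
  Set.subset_iInter₂ fun _ hG => hG.1.1

lemma master (hk : 2 ≤ k)
    (hTconn : ((SimpleGraph.fromEdgeSet H.E).induce T).Connected)
    (hTcard : k - 1 ≤ T.ncard) {G₀ : SimpleGraph V} (hG₀mem : G₀ ∈ Fam k C H T) :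
    ∀ n : ℕ,
      (∀ G ∈ Fam k C H T, ∀ x, (distToSet G T x ≤ (n : ℕ∞) ↔ distToSet G₀ T x ≤ (n : ℕ∞))) ∧
      (∀ x, distToSet G₀ T x = (n : ℕ∞) → ∃ p : ℕ → V, p n = x ∧
        (∀ m, m ≤ n → distToSet G₀ T (p m) = (m : ℕ∞)) ∧
        (∀ m, m + 1 ≤ n → (KG k C H T).Adj (p m) (p (m + 1)))) ∧
      (∀ j : ℕ, 1 ≤ j → j ≤ n → ∀ x y, distToSet G₀ T x = (j : ℕ∞) →
        ((j : ℕ∞) < distToSet G₀ T y) → ∀ G ∈ Fam k C H T, (G.Adj x y ↔ G₀.Adj x y)) := by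
  have hzero : ∀ (G : SimpleGraph V) (z : V),
      distToSet G T z ≤ ((0 : ℕ) : ℕ∞) ↔ z ∈ T := by
    intro G z
    rw [Nat.cast_zero, nonpos_iff_eq_zero]
    exact ⟨DTS.mem_of_eq_zero, DTS.of_mem⟩
  intro n
  induction n with
  | zero =>
    refine ⟨fun G hG x => by rw [hzero, hzero], fun x hx => ⟨fun _ => x, rfl, ?_, by omega⟩,
      by omega⟩
    intro m hm
    interval_cases m
    simpa using hx
  | succ n ih =>
    obtain ⟨An, Bn, Cn⟩ := ih
    --膜 nbhd transfer
    have nbhd_step : ∀ G ∈ Fam k C H T, ∀ G' ∈ Fam k C H T, ∀ y t, y ∉ T → t ∈ T →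
        G.Adj y t → distToSet G' T y ≤ ((1:ℕ) : ℕ∞) := by
      intro G hG G' hG' y t hyT ht hadj
      have hyN : y ∈ setNbhd G T := ⟨hyT, t, ht, hadj.symm⟩
      rw [hG.2.1, ← hG'.2.1] at hyN
      obtain ⟨-, t', ht', hadj'⟩ := hyN
      have h1 := DTS.le_adj (T := T) hadj'.symm
      rw [DTS.of_mem ht'] at h1
      simpa using h1
    have hAnew : ∀ G ∈ Fam k C H T, ∀ y,
        (distToSet G T y ≤ ((n+1 : ℕ) : ℕ∞) ↔ distToSet G₀ T y ≤ ((n+1 : ℕ) : ℕ∞)) := by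
      intro G hG y
      constructor
      · intro hle
        by_contra hc
        by_cases hn : distToSet G T y ≤ (n : ℕ∞)
        · exact hc (((An G hG y).mp hn).trans (by exact_mod_cast Nat.le_succ n))
        · have heq : distToSet G T y = ((n+1 : ℕ) : ℕ∞) := by
            obtain ⟨m, hm, hmn⟩ := ENat.le_coe_iff.mp hle
            have : ¬ m ≤ n := fun h => hn (by rw [hm]; exact_mod_cast h)
            rw [hm]; congr 1; omega
          obtain ⟨x, hadj, hx⟩ := DTS.exists_adj heq
          have hyT : y ∉ T := fun h => hc (by simp [DTS.of_mem h])
          by_cases hxT : x ∈ T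
          · exact hc ((nbhd_step G hG G₀ hG₀mem y x hyT hxT hadj).trans
              (by exact_mod_cast by omega))
          · have hd₀x := (An G hG x).mp hx.le
            obtain ⟨m, hm, hmn⟩ := ENat.le_coe_iff.mp hd₀x
            have hm1 : 1 ≤ m := by
              rcases Nat.eq_zero_or_pos m with rfl | h
              · exact absurd (DTS.mem_of_eq_zero (by simpa using hm)) hxT
              · exact h
            have hyc : (m : ℕ∞) < distToSet G₀ T y := by
              refine lt_of_le_of_lt ?_ (not_le.mp hc)
              exact_mod_cast by omega
            have := (Cn m hm1 hmn x y hm hyc G hG).mp hadj.symm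
            have h2 := DTS.le_adj (T := T) this.symm
            rw [hm] at h2
            refine hc (h2.trans ?_)
            rw [show ((m:ℕ∞) + 1) = ((m+1:ℕ) : ℕ∞) by push_cast; ring]
            exact_mod_cast by omega
      · intro hle
        by_cases hn : distToSet G₀ T y ≤ (n : ℕ∞)
        · exact ((An G hG y).mpr hn).trans (by exact_mod_cast Nat.le_succ n)
        · have heq : distToSet G₀ T y = ((n+1 : ℕ) : ℕ∞) := by
            obtain ⟨m, hm, hmn⟩ := ENat.le_coe_iff.mp hle
            have : ¬ m ≤ n := fun h => hn (by rw [hm]; exact_mod_cast h)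
            rw [hm]; congr 1; omega
          obtain ⟨x, hadj, hx⟩ := DTS.exists_adj heq
          have hyT : y ∉ T := by
            intro h
            rw [DTS.of_mem h] at heq
            exact absurd heq.symm (by simp)
          by_cases hxT : x ∈ T
          · exact (nbhd_step G₀ hG₀mem G hG y x hyT hxT hadj).trans
              (by exact_mod_cast by omega)
          · rcases Nat.eq_zero_or_pos n with rfl | hn1
            · exact absurd (DTS.mem_of_eq_zero (by simpa using hx)) hxT
            · have hyc : (n : ℕ∞) < distToSet G₀ T y := by
                rw [heq]; exact_mod_cast by omega
              have := (Cn n hn1 le_rfl x y hx hyc G hG).mpr hadj.symm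
              calc distToSet G T y ≤ distToSet G T x + 1 := DTS.le_adj (T := T) this.symm
                _ ≤ (n : ℕ∞) + 1 := add_le_add_left ((An G hG x).mpr hx.le) 1
                _ = ((n+1 : ℕ) : ℕ∞) := by push_cast; ring
    have hBnew : ∀ y, distToSet G₀ T y = ((n+1 : ℕ) : ℕ∞) → ∃ p : ℕ → V, p (n+1) = y ∧
        (∀ m, m ≤ n+1 → distToSet G₀ T (p m) = (m : ℕ∞)) ∧
        (∀ m, m + 1 ≤ n+1 → (KG k C H T).Adj (p m) (p (m + 1))) := by
      intro y hy
      obtain ⟨x, hadj, hx⟩ := DTS.exists_adj hy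
      have hyT : y ∉ T := by
        intro h
        rw [DTS.of_mem h] at hy
        exact absurd hy.symm (by simp)
      have hxy : x ≠ y := by
        intro h
        rw [h, hy] at hx
        exact absurd (by exact_mod_cast hx : n + 1 = n) (by omega)
      rcases Nat.eq_zero_or_pos n with rfl | hn1
      · have hxT : x ∈ T := DTS.mem_of_eq_zero (by simpa using hx)
        have hyN : y ∈ setNbhd G₀ T := ⟨hyT, x, hxT, hadj.symm⟩
        rw [hG₀mem.2.1] at hyN
        obtain ⟨-, t, ht, hE⟩ := hyN
        refine ⟨fun m => if m = 0 then t else y, by simp, ?_, ?_⟩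
        · intro m hm
          interval_cases m
          · simpa using DTS.of_mem ht
          · simpa using hy
        · intro m hm
          have hm0 : m = 0 := by omega
          subst hm0
          have hKadj : (KG k C H T).Adj t y := by
            rw [KG, SimpleGraph.fromEdgeSet_adj]
            exact ⟨HE_subset_KE hE, fun h => hyT (h ▸ ht)⟩
          simpa using hKadj
      have hKadj : (KG k C H T).Adj x y := by
        have hyc : (n : ℕ∞) < distToSet G₀ T y := by
          rw [hy]; exact_mod_cast by omega
        have hall : ∀ G ∈ Fam k C H T, G.Adj x y :=
          fun G hG => (Cn n hn1 le_rfl x y hx hyc G hG).mpr hadj.symm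
        rw [KG, SimpleGraph.fromEdgeSet_adj]
        exact ⟨Set.mem_iInter₂.mpr fun G hG => (SimpleGraph.mem_edgeSet G).mpr (hall G hG),
          hxy⟩
      obtain ⟨p, hpx, hp, hpadj⟩ := Bn x hx
      refine ⟨fun m => if m ≤ n then p m else y, by simp, ?_, ?_⟩
      · intro m hm
        by_cases h : m ≤ n
        · simpa [h] using hp m h
        · have : m = n + 1 := by omega
          simpa [h, this] using hy
      · intro m hm
        by_cases h : m + 1 ≤ n
        · simpa [h, (by omega : m ≤ n)] using hpadj m h
        · have hmn : m = n := by omega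
          subst hmn
          simpa [hpx] using hKadj
    refine ⟨fun G hG x => hAnew G hG x, hBnew, ?_⟩
    intro j h1 hjn1 x y hx hy G hG
    rcases Nat.lt_or_ge j (n+1) with hlt | hge
    · exact Cn j h1 (by omega) x y hx hy G hG
    · have hj : j = n + 1 := by omega
      subst hj
      obtain ⟨p, hpx, hp, hpadj⟩ := hBnew x hx
      exact crit hk hTconn hTcard hG₀mem (n+1) (by omega) x y p hpx hp hpadj hy
        (fun G' hG' => hAnew G' hG' y) hG

end Stmt11Aux

open Stmt11Aux in
theorem stmt11 {V : Type*} [Fintype V] [DecidableEq V] (k : ℕ) (hk : 2 ≤ k)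
    (C : Set (Finset V)) (hC : ∀ S ∈ C, S.card = k)
    (H : PartialGraph V) (T : Set V)
    (hTconn : ((SimpleGraph.fromEdgeSet H.E).induce T).Connected)
    (hTcard : k - 1 ≤ T.ncard)
    (hN : (H.nbhd T).Nonempty)
    (G₀ : SimpleGraph V) (hG₀conn : G₀.Connected) (hG₀sup : H.Supergraph G₀)
    (hG₀N : setNbhd G₀ T = H.nbhd T) (hG₀C : connSets k G₀ = C) :
    ∃ (H' : PartialGraph V) (ℓ : ℕ) (L : ℕ → Set V),
      H.PartialSupergraph H' ∧
      L 0 = T ∧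
      (∀ i ≤ ℓ, ∀ j ≤ ℓ, i ≠ j → Disjoint (L i) (L j)) ∧
      (⋃ i ∈ Finset.range (ℓ + 1), L i) = Set.univ ∧
      (∀ i j, i < j → j ≤ ℓ → ¬(i = 0 ∧ j = 1) →
        ∀ x ∈ L i, ∀ y ∈ L j, s(x, y) ∉ H'.EU) ∧
      (∀ i ≤ ℓ, L i =
        {x | distToSet (SimpleGraph.fromEdgeSet H'.E) T x = (i : ℕ∞)}) ∧
      (∀ G : SimpleGraph V, H.Supergraph G → setNbhd G T = H.nbhd T →
        connSets k G = C → H'.Supergraph G) := by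
  have hG₀mem : G₀ ∈ Fam k C H T := ⟨hG₀sup, hG₀N, hG₀C⟩
  have hM := master (G₀ := G₀) hk hTconn hTcard hG₀mem
  have hTne : T.Nonempty := Set.nonempty_of_ncard_ne_zero (by omega)
  have hbound : ∀ x, ∃ n : ℕ, n < Fintype.card V ∧ distToSet G₀ T x = (n : ℕ∞) := by
    intro x
    obtain ⟨t, ht⟩ := hTne
    obtain ⟨w⟩ := hG₀conn.preconnected x t
    have hlt : w.toPath.1.length < Fintype.card V := w.toPath.2.length_lt
    have hle := DTS.le_of_walk (G := G₀) ht w.toPath.1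
    obtain ⟨n, hn, hnle⟩ := ENat.le_coe_iff.mp hle
    exact ⟨n, by omega, hn⟩
  have ddK : ∀ x, distToSet (KG k C H T) T x = distToSet G₀ T x := by
    intro x
    refine le_antisymm ?_ (DTS.mono (KG_le hG₀mem))
    obtain ⟨n, -, hn⟩ := hbound x
    obtain ⟨p, hpx, hp, hpadj⟩ := (hM n).2.1 x hn
    have h2 := dG_chain_le (le_refl (KG k C H T)) p n
      (DTS.mem_of_eq_zero (by simpa using hp 0 (by omega))) hpadj n le_rfl
    rw [hpx] at h2
    rw [hn]
    exact h2
  set UE : Set (Sym2 V) := ⋃ G ∈ Fam k C H T, G.edgeSet with hUE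
  have hKU : KE k C H T ⊆ UE := fun e he =>
    Set.mem_iUnion₂.mpr ⟨G₀, hG₀mem, Set.mem_iInter₂.mp he G₀ hG₀mem⟩
  have hUnd : UE ⊆ {e : Sym2 V | ¬ e.IsDiag} := by
    intro e he
    obtain ⟨G, -, he⟩ := Set.mem_iUnion₂.mp he
    exact G.not_isDiag_of_mem_edgeSet he
  refine ⟨⟨KE k C H T, {e : Sym2 V | ¬ e.IsDiag} \ UE, UE \ KE k C H T, ?_, ?_, ?_, ?_⟩,
    Fintype.card V,
    fun i => {x | distToSet (KG k C H T) T x = (i : ℕ∞)}, ?_, ?_, ?_, ?_, ?_, ?_, ?_⟩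
  · exact Set.disjoint_left.mpr fun e he he' => he'.2 (hKU he)
  · exact Set.disjoint_left.mpr fun e he he' => he'.2 he
  · exact Set.disjoint_left.mpr fun e he he' => he.2 he'.1
  · apply Set.eq_of_subset_of_subset
    · intro e he
      rcases he with he | he
      · rcases he with he | he
        · exact hUnd (hKU he)
        · exact he.1
      · exact hUnd he.1
    · intro e he
      by_cases h1 : e ∈ KE k C H T
      · exact Or.inl (Or.inl h1)
      · by_cases h2 : e ∈ UE
        · exact Or.inr ⟨h2, h1⟩
        · exact Or.inl (Or.inr ⟨he, h2⟩)
  · -- partial supergraph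
    refine ⟨HE_subset_KE, ?_, ?_⟩
    · intro e he
      refine ⟨?_, ?_⟩
      · rw [← H.cover]; exact Or.inl (Or.inr he)
      · intro heU
        obtain ⟨G, hG, heG⟩ := Set.mem_iUnion₂.mp heU
        exact Set.disjoint_left.mp hG.1.2 heG he
    · intro e he
      obtain ⟨heU, heK⟩ := he
      obtain ⟨G, hG, heG⟩ := Set.mem_iUnion₂.mp heU
      have hnd : e ∈ H.E ∪ H.EN ∪ H.EU := by rw [H.cover]; exact hUnd heU
      rcases hnd with (h | h) | h
      · exact absurd (HE_subset_KE h) heK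
      · exact absurd h (fun hh => Set.disjoint_left.mp hG.1.2 heG hh)
      · exact h
  · -- L 0 = T
    ext x
    simp only [Set.mem_setOf_eq, ddK, Nat.cast_zero]
    exact ⟨DTS.mem_of_eq_zero, DTS.of_mem⟩
  · -- disjoint
    intro i _ j _ hne
    refine Set.disjoint_left.mpr fun x hx hx' => hne ?_
    rw [Set.mem_setOf_eq] at hx hx'
    rw [hx] at hx'
    exact_mod_cast hx'
  · -- union
    apply Set.eq_univ_iff_forall.mpr
    intro x
    obtain ⟨n, hnlt, hn⟩ := hbound x
    refine Set.mem_iUnion₂.mpr ⟨n, Finset.mem_range.mpr (by omega), ?_⟩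
    rw [Set.mem_setOf_eq, ddK]
    exact hn
  · -- unknown pairs only between L 0 and L 1
    intro i j hij hjl hnot x hx y hy hmem
    rw [Set.mem_setOf_eq, ddK] at hx hy
    rcases Nat.eq_zero_or_pos i with rfl | hi1
    · have hj2 : 2 ≤ j := by
        rcases Nat.lt_or_ge j 2 with h | h
        · have hj1 : j = 1 := by omega
          exact absurd ⟨rfl, hj1⟩ hnot
        · exact h
      have hxT : x ∈ T := DTS.mem_of_eq_zero (by simpa using hx)
      have hyT : y ∉ T := by
        intro h
        rw [DTS.of_mem h] at hy
        have : j = 0 := by exact_mod_cast hy.symm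
        omega
      have hyn : ∀ G ∈ Fam k C H T, ¬ G.Adj x y := by
        intro G hG hadj
        have hyN : y ∈ setNbhd G T := ⟨hyT, x, hxT, hadj⟩
        rw [hG.2.1, ← hG₀mem.2.1] at hyN
        obtain ⟨-, t, ht, hadjt⟩ := hyN
        have h1 := DTS.le_adj (T := T) hadjt.symm
        rw [DTS.of_mem ht, hy] at h1
        have : j ≤ 1 := by exact_mod_cast h1
        omega
      obtain ⟨G, hG, he⟩ := Set.mem_iUnion₂.mp hmem.1
      exact hyn G hG ((SimpleGraph.mem_edgeSet G).mp he)
    · have hylt : (i : ℕ∞) < distToSet G₀ T y := by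
        rw [hy]; exact_mod_cast hij
      have hcrit : ∀ G ∈ Fam k C H T, (G.Adj x y ↔ G₀.Adj x y) :=
        fun G hG => (hM i).2.2 i hi1 le_rfl x y hx hylt G hG
      by_cases hadj0 : G₀.Adj x y
      · exact hmem.2 (Set.mem_iInter₂.mpr fun G hG =>
          (SimpleGraph.mem_edgeSet G).mpr ((hcrit G hG).mpr hadj0))
      · obtain ⟨G, hG, he⟩ := Set.mem_iUnion₂.mp hmem.1
        exact hadj0 ((hcrit G hG).mp ((SimpleGraph.mem_edgeSet G).mp he))
  · -- levels are distance levels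
    intro i _
    rfl
  · -- every consistent graph is a supergraph of H'
    intro G h1 h2 h3
    have hG : G ∈ Fam k C H T := ⟨h1, h2, h3⟩
    refine ⟨fun e he => Set.mem_iInter₂.mp he G hG, ?_⟩
    exact Set.disjoint_left.mpr fun e he hmem => hmem.2 (Set.mem_iUnion₂.mpr ⟨G, hG, he⟩)
end

section
/- Let k ≥ 2 be an integer, V a finite set, and C a family of k-element subsets of V. Let H = (E, E_N, E_U) be a partial graph on V and T ⊆ V such that T induces a connected subgraph of the graph (V, E), |T| ≥ k − 1, N_H(T) ≠ ∅, and no pair of vertices of N_H[T] belongs to E_U. Then there is at most one connected triangle-free simple graph G on V such that G is a supergraph of H, N_G(T) = N_H(T), and S_k(G) = C; that is, any two such graphs are equal. -/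
open SimpleGraph

lemma induce_singleton_connected (G : SimpleGraph V) (v : V) :
    (G.induce {v}).Connected := by
  have : Nonempty ({v} : Set V) := ⟨⟨v, rfl⟩⟩
  refine ⟨fun a b => ?_⟩
  have : a = b := Subtype.ext (a.2.trans b.2.symm)
  subst this
  exact Reachable.refl _

lemma induce_connected_mono {G G' : SimpleGraph V} (h : G ≤ G') {s : Set V}
    (hc : (G.induce s).Connected) : (G'.induce s).Connected := by
  refine hc.mono (fun a b hab => ?_)
  simp only [comap_adj, Function.Embedding.coe_subtype] at hab ⊢
  exact h hab

lemma induce_connected_congr {G₁ G₂ : SimpleGraph V} {s : Set V}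
    (h : ∀ a ∈ s, ∀ b ∈ s, G₁.Adj a b ↔ G₂.Adj a b)
    (hc : (G₁.induce s).Connected) : (G₂.induce s).Connected := by
  refine hc.mono (fun a b hab => ?_)
  simp only [comap_adj, Function.Embedding.coe_subtype] at hab ⊢
  exact (h _ a.2 _ b.2).mp hab

lemma exists_crossing_adj {G : SimpleGraph V} {Q : Set V} {a b : V} (w : G.Walk a b)
    (ha : a ∈ Q) (hb : b ∉ Q) : ∃ p ∈ Q, ∃ q, q ∉ Q ∧ G.Adj p q := by
  induction w with
  | nil => exact absurd ha hb
  | @cons u c b h p ih =>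
    by_cases hc : c ∈ Q
    · exact ih hc hb
    · exact ⟨u, ha, c, hc, h⟩

lemma exists_crossing_in (G : SimpleGraph V) {S Q : Set V} (hQS : Q ⊆ S)
    (hconn : (G.induce S).Connected) {t x : V} (ht : t ∈ Q) (hx : x ∈ S) (hxQ : x ∉ Q) :
    ∃ p ∈ Q, ∃ q ∈ S, q ∉ Q ∧ G.Adj p q := by
  obtain ⟨w⟩ := hconn.preconnected ⟨t, hQS ht⟩ ⟨x, hx⟩
  obtain ⟨p, hp, q, hq, hadj⟩ :=
    exists_crossing_adj (Q := {a : S | a.1 ∈ Q}) w ht hxQ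
  simp only [comap_adj, Function.Embedding.coe_subtype] at hadj
  exact ⟨p.1, hp, q.1, q.2, hq, hadj⟩

lemma pendant_connected_iff {G : SimpleGraph V} {Q : Set V} {v u : V}
    (hv : v ∉ Q) (hu : u ∈ Q) (hQ : (G.induce Q).Connected)
    (hnb : ∀ x ∈ Q, G.Adj v x → x = u) :
    (G.induce (insert v Q)).Connected ↔ G.Adj v u := by
  constructor
  · intro h
    have hvu : v ≠ u := fun e => hv (e ▸ hu)
    obtain ⟨w⟩ := h.preconnected ⟨v, Set.mem_insert _ _⟩ ⟨u, Set.mem_insert_of_mem _ hu⟩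
    cases w with
    | nil => exact absurd rfl hvu
    | @cons _ c _ hadj p =>
      have hG : G.Adj v c.1 := by
        simpa only [comap_adj, Function.Embedding.coe_subtype] using hadj
      rcases c.2 with hc | hc
      · rw [hc] at hG
        exact absurd hG (G.loopless.irrefl v)
      · exact (hnb _ hc hG) ▸ hG
  · intro h
    have hins : insert v Q = {v, u} ∪ Q := by
      ext x
      simp only [Set.mem_insert_iff, Set.mem_union, Set.mem_singleton_iff]
      constructor
      · rintro (rfl | hx)
        · exact Or.inl (Or.inl rfl)
        · exact Or.inr hx
      · rintro ((rfl | rfl) | hx)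
        · exact Or.inl rfl
        · exact Or.inr hu
        · exact Or.inr hx
    rw [hins]
    exact induce_union_connected (induce_pair_connected_of_adj h).preconnected hQ.preconnected ⟨u, by simp, hu⟩

lemma pair_connected_iff_adj {G : SimpleGraph V} {v w : V} (hne : v ≠ w) :
    (G.induce {v, w}).Connected ↔ G.Adj v w := by
  have : ({v, w} : Set V) = insert v {w} := rfl
  rw [this]
  exact pendant_connected_iff (by simpa using hne) rfl
    (induce_singleton_connected G w) (fun x hx _ => hx)

lemma exists_conn_subset (G : SimpleGraph V) {S : Set V} (hS : (G.induce S).Connected)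
    {t : V} (ht : t ∈ S) (m : ℕ) (h1 : 1 ≤ m) : m ≤ S.ncard →
    ∃ Q : Finset V, ↑Q ⊆ S ∧ t ∈ Q ∧ Q.card = m ∧ (G.induce ↑Q).Connected := by
  classical
  induction m, h1 using Nat.le_induction with
  | base =>
    intro _
    refine ⟨{t}, by simpa using ht, by simp, by simp, ?_⟩
    rw [Finset.coe_singleton]
    exact induce_singleton_connected G t
  | succ m hm ih =>
    intro hle
    obtain ⟨Q, hQS, htQ, hQcard, hQconn⟩ := ih (le_trans (Nat.le_succ m) hle)
    have hlt : Q.card < S.ncard := by omega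
    have : ∃ x ∈ S, x ∉ Q := by
      by_contra hcon
      push_neg at hcon
      have : S ⊆ ↑Q := fun x hx => hcon x hx
      have := Set.ncard_le_ncard this (Finset.finite_toSet Q)
      rw [Set.ncard_coe_finset] at this
      omega
    obtain ⟨x, hxS, hxQ⟩ := this
    obtain ⟨p, hp, q, hqS, hqQ, hadj⟩ := exists_crossing_in G hQS hS htQ hxS hxQ
    refine ⟨insert q Q, ?_, Finset.mem_insert_of_mem htQ, ?_, ?_⟩
    · rw [Finset.coe_insert]
      exact Set.insert_subset hqS hQS
    · rw [Finset.card_insert_of_notMem hqQ, hQcard]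
    · rw [Finset.coe_insert]
      have hins : (insert q ↑Q : Set V) = {q, p} ∪ ↑Q := by
        ext y
        simp only [Set.mem_insert_iff, Set.mem_union, Set.mem_singleton_iff, Finset.mem_coe]
        constructor
        · rintro (rfl | hy)
          · exact Or.inl (Or.inl rfl)
          · exact Or.inr hy
        · rintro ((rfl | rfl) | hy)
          · exact Or.inl rfl
          · exact Or.inr hp
          · exact Or.inr hy
      rw [hins]
      exact induce_union_connected (induce_pair_connected_of_adj hadj.symm).preconnected hQconn.preconnected
        ⟨p, by simp, hp⟩

lemma induce_union_nbhd_connected {G : SimpleGraph V} {S A : Set V} [Fintype V]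
    (hS : (G.induce S).Connected) (hA : ∀ v ∈ A, ∃ s ∈ S, G.Adj s v) :
    (G.induce (S ∪ A)).Connected := by
  classical
  have key : ∀ B : Set V, B.Finite → B ⊆ A → (G.induce (S ∪ B)).Connected := by
    intro B hB
    refine Set.Finite.induction_on (motive := fun B _ => B ⊆ A → (G.induce (S ∪ B)).Connected) B hB
      (fun _ => by rw [Set.union_empty]; exact hS) ?_
    intro a B haB hBfin ihB hsub
    obtain ⟨s, hsS, hadj⟩ := hA a (hsub (Set.mem_insert _ _))
    have hins : S ∪ insert a B = {s, a} ∪ (S ∪ B) := by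
      ext x
      simp only [Set.mem_union, Set.mem_insert_iff, Set.mem_singleton_iff]
      constructor
      · rintro (hx | (rfl | hx))
        · exact Or.inr (Or.inl hx)
        · exact Or.inl (Or.inr rfl)
        · exact Or.inr (Or.inr hx)
      · rintro ((rfl | rfl) | (hx | hx))
        · exact Or.inl hsS
        · exact Or.inr (Or.inl rfl)
        · exact Or.inl hx
        · exact Or.inr (Or.inr hx)
    rw [hins]
    exact induce_union_connected (induce_pair_connected_of_adj hadj).preconnected
      (ihB (le_trans (Set.subset_insert _ _) hsub)).preconnected ⟨s, by simp, Or.inl hsS⟩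
  exact key A (Set.toFinite A) le_rfl

lemma not_adj_of_common {G : SimpleGraph V} [DecidableEq V] (hfree : G.CliqueFree 3)
    {u x y : V} (hux : G.Adj u x) (huy : G.Adj u y) : ¬ G.Adj x y :=
  fun hxy => hfree {u, x, y} (is3Clique_triple_iff.mpr ⟨hux, huy, hxy⟩)

lemma keyLemma {V : Type*} [Fintype V] [DecidableEq V] {k : ℕ} (hk : 3 ≤ k)
    {C : Set (Finset V)} {G₁ G₂ : SimpleGraph V}
    (hconn₁ : G₁.Connected) (hfree₁ : G₁.CliqueFree 3) (hC₁ : connSets k G₁ = C)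
    (hfree₂ : G₂.CliqueFree 3) (hC₂ : connSets k G₂ = C) :
    ∀ n (S : Set V), Sᶜ.ncard ≤ n →
      k - 1 ≤ S.ncard → (G₁.induce S).Connected →
      (∀ x ∈ S ∪ setNbhd G₁ S, ∀ y ∈ S ∪ setNbhd G₁ S, (G₁.Adj x y ↔ G₂.Adj x y)) →
      setNbhd G₁ S = setNbhd G₂ S →
      G₁ = G₂ := by
  intro n
  induction n with
  | zero =>
    intro S hn _ _ hagree _
    have hSc : Sᶜ = ∅ := (Set.ncard_eq_zero (Set.toFinite _)).mp (Nat.le_zero.mp hn)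
    have hU : S = Set.univ := Set.compl_empty_iff.mp hSc
    ext x y
    exact hagree x (Or.inl (by simp [hU])) y (Or.inl (by simp [hU]))
  | succ n ih =>
    intro S hn hScard hSconn hagree hNeq
    by_cases hNemp : setNbhd G₁ S = ∅
    · have hU : S = Set.univ := by
        by_contra hne
        obtain ⟨v, hv⟩ : Sᶜ.Nonempty := Set.nonempty_compl.mpr hne
        have hSne : S.Nonempty := by
          refine Set.nonempty_of_ncard_ne_zero ?_
          omega
        obtain ⟨t, ht⟩ := hSne
        obtain ⟨w⟩ := hconn₁.preconnected t v
        obtain ⟨p, hp, q, hq, hadj⟩ := exists_crossing_adj (Q := S) w ht hv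
        have hmem : q ∈ setNbhd G₁ S := ⟨hq, p, hp, hadj⟩
        rw [hNemp] at hmem
        exact hmem
      ext x y
      exact hagree x (Or.inl (by simp [hU])) y (Or.inl (by simp [hU]))
    · have hNne : (setNbhd G₁ S).Nonempty := Set.nonempty_iff_ne_empty.mpr hNemp
      set N := setNbhd G₁ S with hNdef
      have memC : ∀ (G : SimpleGraph V), connSets k G = C → ∀ P : Finset V,
          P.card = k → (P ∈ C ↔ (G.induce (P : Set V)).Connected) := by
        intro G hCG P hP
        rw [← hCG]
        exact ⟨fun h => h.2, fun h => ⟨hP, h⟩⟩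
      -- Step 2: edges between N and the outside are determined
      have step2 : ∀ u ∈ N, ∀ v, v ∉ S → v ∉ N → (G₁.Adj u v ↔ G₂.Adj u v) := by
        intro u hu v hvS hvN
        have hvu : v ≠ u := fun h => hvN (h ▸ hu)
        obtain ⟨huS, t, htS, hadj⟩ := id hu
        have hins : (G₁.induce (insert u S)).Connected := by
          have h1 : insert u S = {u, t} ∪ S := by
            ext z
            simp only [Set.mem_insert_iff, Set.mem_union, Set.mem_singleton_iff]
            constructor
            · rintro (rfl | hz)
              exacts [Or.inl (Or.inl rfl), Or.inr hz]
            · rintro ((rfl | rfl) | hz)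
              exacts [Or.inl rfl, Or.inr htS, Or.inr hz]
          rw [h1]
          exact induce_union_connected (induce_pair_connected_of_adj hadj.symm).preconnected hSconn.preconnected
            ⟨t, by simp, htS⟩
        have hmcard : k - 1 ≤ (insert u S).ncard :=
          le_trans hScard (Set.ncard_le_ncard (Set.subset_insert _ _) (Set.toFinite _))
        obtain ⟨Q, hQsub, huQ, hQcard, hQconn⟩ :=
          exists_conn_subset G₁ hins (Set.mem_insert u S) (k-1) (by omega) hmcard
        have hQcl : ∀ x ∈ (Q : Set V), x ∈ S ∪ N := by
          intro x hx
          rcases Set.mem_insert_iff.mp (hQsub hx) with rfl | hxS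
          · exact Or.inr ⟨huS, t, htS, hadj⟩
          · exact Or.inl hxS
        have hQconn₂ : (G₂.induce (Q : Set V)).Connected :=
          induce_connected_congr (fun a ha b hb => hagree a (hQcl a ha) b (hQcl b hb)) hQconn
        have hvQ : v ∉ Q := by
          intro h
          rcases Set.mem_insert_iff.mp (hQsub (Finset.mem_coe.mpr h)) with rfl | h'
          · exact hvu rfl
          · exact hvS h'
        have hPcard : (insert v Q).card = k := by
          rw [Finset.card_insert_of_notMem hvQ, hQcard]
          omega
        have pend : ∀ (G : SimpleGraph V), setNbhd G S = N → (G.induce (Q : Set V)).Connected →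
            ((G.induce ((insert v Q : Finset V) : Set V)).Connected ↔ G.Adj v u) := by
          intro G hNG hQc
          rw [Finset.coe_insert]
          refine pendant_connected_iff (by simpa using hvQ) (by simpa using huQ) hQc ?_
          intro x hx hadjvx
          rcases Set.mem_insert_iff.mp (hQsub hx) with rfl | hxS
          · rfl
          · exact absurd (show v ∈ setNbhd G S from ⟨hvS, x, hxS, hadjvx.symm⟩)
              (by rw [hNG]; exact hvN)
        calc G₁.Adj u v ↔ G₁.Adj v u := G₁.adj_comm u v
          _ ↔ (G₁.induce ((insert v Q : Finset V) : Set V)).Connected :=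
              (pend G₁ hNdef.symm hQconn).symm
          _ ↔ (insert v Q) ∈ C := (memC G₁ hC₁ _ hPcard).symm
          _ ↔ (G₂.induce ((insert v Q : Finset V) : Set V)).Connected := memC G₂ hC₂ _ hPcard
          _ ↔ G₂.Adj v u := pend G₂ hNeq.symm hQconn₂
          _ ↔ G₂.Adj u v := G₂.adj_comm v u
      -- Step 3: edges between two second-neighborhood vertices are determined
      have step3 : ∀ x y, x ∉ S → x ∉ N → y ∉ S → y ∉ N →
          (∃ u ∈ N, G₁.Adj u x) → (∃ u' ∈ N, G₁.Adj u' y) →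
          (G₁.Adj x y ↔ G₂.Adj x y) := by
        intro x y hxS hxN hyS hyN hx' _
        obtain ⟨u, huN, hux⟩ := hx'
        by_cases hxy : x = y
        · subst hxy
          exact iff_of_false (G₁.loopless.irrefl x) (G₂.loopless.irrefl x)
        by_cases hcom : ∃ w ∈ N, G₁.Adj w x ∧ G₁.Adj w y
        · obtain ⟨w, hwN, hwx, hwy⟩ := hcom
          exact iff_of_false (not_adj_of_common hfree₁ hwx hwy)
            (not_adj_of_common hfree₂ ((step2 w hwN x hxS hxN).mp hwx)
              ((step2 w hwN y hyS hyN).mp hwy))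
        · have huy : ¬ G₁.Adj u y := fun h => hcom ⟨u, huN, hux, h⟩
          have hux₂ : G₂.Adj u x := (step2 u huN x hxS hxN).mp hux
          have huy₂ : ¬ G₂.Adj u y := fun h => huy ((step2 u huN y hyS hyN).mpr h)
          obtain ⟨huS, t, htS, hadj⟩ := huN
          have hxu : x ≠ u := fun h => hxN (h ▸ ⟨huS, t, htS, hadj⟩)
          have hyu : y ≠ u := fun h => hyN (h ▸ ⟨huS, t, htS, hadj⟩)
          have hins : (G₁.induce (insert u S)).Connected := by
            have h1 : insert u S = {u, t} ∪ S := by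
              ext z
              simp only [Set.mem_insert_iff, Set.mem_union, Set.mem_singleton_iff]
              constructor
              · rintro (rfl | hz)
                exacts [Or.inl (Or.inl rfl), Or.inr hz]
              · rintro ((rfl | rfl) | hz)
                exacts [Or.inl rfl, Or.inr htS, Or.inr hz]
            rw [h1]
            exact induce_union_connected (induce_pair_connected_of_adj hadj.symm).preconnected hSconn.preconnected
              ⟨t, by simp, htS⟩
          have hmcard : k - 2 ≤ (insert u S).ncard := by
            have := le_trans hScard (Set.ncard_le_ncard (Set.subset_insert u S) (Set.toFinite _))
            omega
          obtain ⟨Q, hQsub, huQ, hQcard, hQconn⟩ :=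
            exists_conn_subset G₁ hins (Set.mem_insert u S) (k-2) (by omega) hmcard
          have hQcl : ∀ z ∈ (Q : Set V), z ∈ S ∪ N := by
            intro z hz
            rcases Set.mem_insert_iff.mp (hQsub hz) with rfl | hzS
            · exact Or.inr ⟨huS, t, htS, hadj⟩
            · exact Or.inl hzS
          have hQconn₂ : (G₂.induce (Q : Set V)).Connected :=
            induce_connected_congr (fun a ha b hb => hagree a (hQcl a ha) b (hQcl b hb)) hQconn
          have hxQ : x ∉ Q := by
            intro h
            rcases Set.mem_insert_iff.mp (hQsub (Finset.mem_coe.mpr h)) with rfl | h'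
            · exact hxu rfl
            · exact hxS h'
          have hyQ₂ : y ∉ insert x Q := by
            intro h
            rcases Finset.mem_insert.mp h with rfl | h'
            · exact hxy rfl
            rcases Set.mem_insert_iff.mp (hQsub (Finset.mem_coe.mpr h')) with rfl | h''
            · exact hyu rfl
            · exact hyS h''
          have hPcard : (insert y (insert x Q)).card = k := by
            rw [Finset.card_insert_of_notMem hyQ₂, Finset.card_insert_of_notMem hxQ, hQcard]
            omega
          have hQ₂conn : ∀ (G : SimpleGraph V), G.Adj x u → (G.induce (Q : Set V)).Connected →
              (G.induce ((insert x Q : Finset V) : Set V)).Connected := by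
            intro G hGxu hQc
            rw [Finset.coe_insert]
            have h2 : (insert x (Q : Set V)) = {x, u} ∪ (Q : Set V) := by
              ext z
              simp only [Set.mem_insert_iff, Set.mem_union, Set.mem_singleton_iff,
                Finset.mem_coe]
              constructor
              · rintro (rfl | hz)
                exacts [Or.inl (Or.inl rfl), Or.inr hz]
              · rintro ((rfl | rfl) | hz)
                exacts [Or.inl rfl, Or.inr huQ, Or.inr hz]
            rw [h2]
            exact induce_union_connected (induce_pair_connected_of_adj hGxu).preconnected hQc.preconnected
              ⟨u, by simp, huQ⟩
          have pend : ∀ (G : SimpleGraph V), setNbhd G S = N → ¬ G.Adj u y →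
              (G.induce ((insert x Q : Finset V) : Set V)).Connected →
              ((G.induce ((insert y (insert x Q) : Finset V) : Set V)).Connected ↔ G.Adj y x) := by
            intro G hNG hGuy hQ₂c
            rw [Finset.coe_insert]
            refine pendant_connected_iff (by simpa using hyQ₂)
              (by simp) hQ₂c ?_
            intro z hz hadjyz
            rcases Finset.mem_insert.mp (Finset.mem_coe.mp hz) with rfl | hzQ
            · rfl
            rcases Set.mem_insert_iff.mp (hQsub hzQ) with rfl | hzS
            · exact absurd hadjyz.symm hGuy
            · exact absurd (show y ∈ setNbhd G S from ⟨hyS, z, hzS, hadjyz.symm⟩)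
                (by rw [hNG]; exact hyN)
          calc G₁.Adj x y ↔ G₁.Adj y x := G₁.adj_comm x y
            _ ↔ (G₁.induce ((insert y (insert x Q) : Finset V) : Set V)).Connected :=
                (pend G₁ hNdef.symm huy (hQ₂conn G₁ hux.symm hQconn)).symm
            _ ↔ (insert y (insert x Q)) ∈ C := (memC G₁ hC₁ _ hPcard).symm
            _ ↔ (G₂.induce ((insert y (insert x Q) : Finset V) : Set V)).Connected :=
                memC G₂ hC₂ _ hPcard
            _ ↔ G₂.Adj y x := pend G₂ hNeq.symm huy₂ (hQ₂conn G₂ hux₂.symm hQconn₂)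
            _ ↔ G₂.Adj x y := G₂.adj_comm y x
      -- Assemble the enlarged set S' = S ∪ N and recurse
      set S' := S ∪ N with hS'def
      have hS'conn : (G₁.induce S').Connected :=
        induce_union_nbhd_connected hSconn (fun v hv => hv.2)
      have hS'card : k - 1 ≤ S'.ncard :=
        le_trans hScard (Set.ncard_le_ncard Set.subset_union_left (Set.toFinite _))
      have hS'n : S'ᶜ.ncard ≤ n := by
        obtain ⟨u₀, hu₀⟩ := hNne
        have hss : S'ᶜ ⊂ Sᶜ := by
          refine (Set.ssubset_iff_of_subset (Set.compl_subset_compl.mpr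
            Set.subset_union_left)).mpr ?_
          exact ⟨u₀, hu₀.1, fun h => h (Or.inr hu₀)⟩
        have := Set.ncard_lt_ncard hss (Set.toFinite _)
        omega
      have hN'char : ∀ v, v ∈ setNbhd G₁ S' → v ∉ S ∧ v ∉ N ∧ ∃ u ∈ N, G₁.Adj u v := by
        intro v hv
        obtain ⟨hvS', s', hs', hadj⟩ := hv
        have hvS : v ∉ S := fun h => hvS' (Or.inl h)
        have hvN : v ∉ N := fun h => hvS' (Or.inr h)
        rcases hs' with hs'S | hs'N
        · exact absurd (show v ∈ setNbhd G₁ S from ⟨hvS, s', hs'S, hadj⟩) hvN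
        · exact ⟨hvS, hvN, s', hs'N, hadj⟩
      have hNeq' : setNbhd G₁ S' = setNbhd G₂ S' := by
        ext v
        constructor
        · intro hv
          obtain ⟨hvS, hvN, u, huN, hadj⟩ := hN'char v hv
          exact ⟨hv.1, u, Or.inr huN, (step2 u huN v hvS hvN).mp hadj⟩
        · rintro ⟨hvS', s', hs', hadj₂⟩
          have hvS : v ∉ S := fun h => hvS' (Or.inl h)
          have hvN : v ∉ N := fun h => hvS' (Or.inr h)
          rcases hs' with hs'S | hs'N
          · refine absurd (show v ∈ setNbhd G₂ S from ⟨hvS, s', hs'S, hadj₂⟩) ?_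
            rw [← hNeq]
            exact hvN
          · exact ⟨hvS', s', Or.inr hs'N, (step2 s' hs'N v hvS hvN).mpr hadj₂⟩
      have core : ∀ x, x ∈ S ∪ N → ∀ y, y ∈ setNbhd G₁ S' → (G₁.Adj x y ↔ G₂.Adj x y) := by
        intro x hx y hy
        obtain ⟨hyS, hyN, u, huN, huy⟩ := hN'char y hy
        rcases hx with hxS | hxN
        · refine iff_of_false (fun h => hyN ⟨hyS, x, hxS, h⟩) (fun h => ?_)
          have hmem : y ∈ setNbhd G₂ S := ⟨hyS, x, hxS, h⟩
          rw [← hNeq] at hmem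
          exact hyN hmem
        · exact step2 x hxN y hyS hyN
      have hagree' : ∀ x ∈ S' ∪ setNbhd G₁ S', ∀ y ∈ S' ∪ setNbhd G₁ S',
          (G₁.Adj x y ↔ G₂.Adj x y) := by
        intro x hx y hy
        rcases hx with hx | hx
        · rcases hy with hy | hy
          · exact hagree x hx y hy
          · exact core x hx y hy
        · rcases hy with hy | hy
          · rw [G₁.adj_comm, G₂.adj_comm]
            exact core y hy x hx
          · obtain ⟨hxS, hxN, hxP⟩ := hN'char x hx
            obtain ⟨hyS, hyN, hyP⟩ := hN'char y hy
            exact step3 x y hxS hxN hyS hyN hxP hyP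
      exact ih S' hS'n hS'card hS'conn hagree' hNeq'

theorem stmt12 {V : Type*} [Fintype V] [DecidableEq V] (k : ℕ) (hk : 2 ≤ k)
    (C : Set (Finset V)) (hC : ∀ S ∈ C, S.card = k)
    (H : PartialGraph V) (T : Set V)
    (hTconn : ((SimpleGraph.fromEdgeSet H.E).induce T).Connected)
    (hTcard : k - 1 ≤ T.ncard)
    (hN : (H.nbhd T).Nonempty)
    (hknown : ∀ x ∈ T ∪ H.nbhd T, ∀ y ∈ T ∪ H.nbhd T, s(x, y) ∉ H.EU)
    (G₁ G₂ : SimpleGraph V)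
    (hconn₁ : G₁.Connected) (hfree₁ : G₁.CliqueFree 3)
    (hsup₁ : H.Supergraph G₁) (hN₁ : setNbhd G₁ T = H.nbhd T)
    (hC₁ : connSets k G₁ = C)
    (hconn₂ : G₂.Connected) (hfree₂ : G₂.CliqueFree 3)
    (hsup₂ : H.Supergraph G₂) (hN₂ : setNbhd G₂ T = H.nbhd T)
    (hC₂ : connSets k G₂ = C) :
    G₁ = G₂ := by
  rcases Nat.lt_or_ge k 3 with hk3 | hk3
  · -- the case k = 2
    have hk2 : k = 2 := by omega
    subst hk2
    have hadj : ∀ (G : SimpleGraph V), connSets 2 G = C → ∀ v w : V,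
        (G.Adj v w ↔ ({v, w} : Finset V) ∈ C) := by
      intro G hCG v w
      rw [← hCG]
      constructor
      · intro h
        refine ⟨?_, ?_⟩
        · rw [Finset.card_insert_of_notMem (by simp [h.ne]), Finset.card_singleton]
        · have hco : (({v, w} : Finset V) : Set V) = {v, w} := by simp
          rw [hco]
          exact induce_pair_connected_of_adj h
      · rintro ⟨hcard, hconn⟩
        have hne : v ≠ w := by
          intro h
          subst h
          simp at hcard
        have hco : (({v, w} : Finset V) : Set V) = {v, w} := by simp
        rw [hco] at hconn
        exact (pair_connected_iff_adj hne).mp hconn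
    ext v w
    rw [hadj G₁ hC₁ v w, hadj G₂ hC₂ v w]
  · -- the case k ≥ 3
    have base_agree : ∀ x ∈ T ∪ H.nbhd T, ∀ y ∈ T ∪ H.nbhd T,
        (G₁.Adj x y ↔ G₂.Adj x y) := by
      intro x hx y hy
      by_cases hxy : x = y
      · subst hxy
        exact iff_of_false (G₁.loopless.irrefl x) (G₂.loopless.irrefl x)
      · have hmem : s(x, y) ∈ H.E ∪ H.EN ∪ H.EU := by
          rw [H.cover]
          simpa [Sym2.mk_isDiag_iff] using hxy
        rcases hmem with (hE | hEN) | hEU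
        · exact iff_of_true ((SimpleGraph.mem_edgeSet _).mp (hsup₁.1 hE))
            ((SimpleGraph.mem_edgeSet _).mp (hsup₂.1 hE))
        · exact iff_of_false
            (fun h => Set.disjoint_left.mp hsup₁.2 ((SimpleGraph.mem_edgeSet _).mpr h) hEN)
            (fun h => Set.disjoint_left.mp hsup₂.2 ((SimpleGraph.mem_edgeSet _).mpr h) hEN)
        · exact absurd hEU (hknown x hx y hy)
    have hTconn₁ : (G₁.induce T).Connected := by
      refine induce_connected_mono (fun a b hab => ?_) hTconn
      exact (SimpleGraph.mem_edgeSet _).mp (hsup₁.1 ((SimpleGraph.fromEdgeSet_adj _).mp hab).1)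
    exact keyLemma hk3 hconn₁ hfree₁ hC₁ hfree₂ hC₂ (Tᶜ.ncard) T le_rfl hTcard hTconn₁
      (by rw [hN₁]; exact base_agree) (hN₁.trans hN₂.symm)
end

section
/- Let k ≥ 2 be an integer and let G be a connected finite simple graph on a vertex set V with |V| > 2k − 2. If u, v are non-adjacent vertices of G that are fake neighbors with respect to k, then u and v have a common neighbor in G, i.e. N_G(u) ∩ N_G(v) ≠ ∅. -/
namespace Stmt13Aux

open SimpleGraph

variable {V : Type*}

/-- The graph `G` with all edges incident to the closed neighborhood of `u` removed. -/
def Hg (G : SimpleGraph V) (u : V) : SimpleGraph V where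
  Adj x y := G.Adj x y ∧ (x ≠ u ∧ ¬ G.Adj u x) ∧ (y ≠ u ∧ ¬ G.Adj u y)
  symm := ⟨fun x y ⟨h, hx, hy⟩ => ⟨h.symm, hy, hx⟩⟩
  loopless := ⟨fun x ⟨h, _, _⟩ => G.loopless.irrefl x h⟩

lemma induce_singleton_connected (G : SimpleGraph V) (a : V) :
    (G.induce {a}).Connected := by
  haveI : Nonempty ({a} : Set V) := ⟨⟨a, rfl⟩⟩
  exact ⟨fun x y => by rw [Subtype.ext (x.2.trans y.2.symm)]⟩

lemma reach_avoid {G : SimpleGraph V} {u v x : V} (hvu : v ≠ u) (hnadj : ¬ G.Adj u v)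
    (h : (Hg G u).Reachable x v) : x ≠ u ∧ ¬ G.Adj u x := by
  obtain ⟨p⟩ := h
  cases p with
  | nil => exact ⟨hvu, hnadj⟩
  | cons h q => exact h.2.1

lemma exists_boundary {H : SimpleGraph V} {S : Finset V} {v : V} :
    ∀ {w : V}, H.Walk w v → w ∉ S → v ∈ S →
      ∃ a, a ∉ S ∧ H.Reachable a v ∧ ∃ b ∈ S, H.Adj a b := by
  intro w p
  induction p with
  | nil => intro hw hv; exact absurd hv hw
  | @cons w x v h q ih =>
    intro hw hv
    by_cases hx : x ∈ S
    · exact ⟨w, hw, ⟨SimpleGraph.Walk.cons h q⟩, x, hx, h⟩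
    · exact ih hx hv

lemma exists_grow [DecidableEq V] (H : SimpleGraph V) (v : V) (C : Finset V)
    (hC : ∀ x, x ∈ C ↔ H.Reachable x v) :
    ∀ k : ℕ, 1 ≤ k → k ≤ C.card →
    ∃ S : Finset V, S.card = k ∧ v ∈ S ∧ (∀ x ∈ S, H.Reachable x v) ∧
      (H.induce (S : Set V)).Connected := by
  intro k
  induction k with
  | zero => omega
  | succ k ih =>
    intro _ hk1
    by_cases hk0 : k = 0
    · subst hk0
      refine ⟨{v}, by simp, by simp, ?_, ?_⟩
      · intro x hx
        rw [Finset.mem_singleton] at hx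
        rw [hx]
      · rw [Finset.coe_singleton]
        exact induce_singleton_connected H v
    · obtain ⟨S, hScard, hvS, hSreach, hSconn⟩ :=
        ih (by omega) (by omega)
      have hSsub : S ⊆ C := fun x hx => (hC x).2 (hSreach x hx)
      have : ∃ w, w ∈ C ∧ w ∉ S := by
        by_contra hcon
        push_neg at hcon
        have : C ⊆ S := fun x hx => hcon x hx
        have := Finset.card_le_card this
        omega
      obtain ⟨w, hwC, hwS⟩ := this
      obtain ⟨p⟩ := (hC w).1 hwC
      obtain ⟨a, haS, haReach, b, hbS, hab⟩ := exists_boundary p hwS hvS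
      refine ⟨insert a S, ?_, Finset.mem_insert_of_mem hvS, ?_, ?_⟩
      · rw [Finset.card_insert_of_notMem haS, hScard]
      · intro x hx
        rcases Finset.mem_insert.1 hx with h | h
        · subst h; exact haReach
        · exact hSreach x h
      · rw [Finset.coe_insert, Set.insert_eq]
        exact SimpleGraph.connected_induce_union (induce_singleton_connected H a).preconnected
          hSconn.preconnected rfl hbS hab

lemma oneSide [DecidableEq V] (G : SimpleGraph V) (k : ℕ) (hk : 2 ≤ k) {u v : V}
    (huv : u ≠ v) (hnadj : ¬ G.Adj u v)
    (C : Finset V) (hC : ∀ x, x ∈ C ↔ (Hg G u).Reachable x v)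
    (hbig : k ≤ C.card) :
    OneSideClear k G u v := by
  obtain ⟨S, hScard, hvS, hSreach, hSconn⟩ :=
    exists_grow (Hg G u) v C hC k (by omega) hbig
  have hSavoid : ∀ x ∈ S, x ≠ u ∧ ¬ G.Adj u x := fun x hx =>
    reach_avoid (Ne.symm huv) hnadj (hSreach x hx)
  refine ⟨S, hScard, ?_, hvS, fun huS => (hSavoid u huS).1 rfl, ?_⟩
  · refine hSconn.mono ?_
    intro x y h
    simp only [SimpleGraph.comap_adj, Function.Embedding.coe_subtype] at h ⊢
    exact h.1
  · intro v' hv' hconn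
    have hcardE : (S.erase v').card = k - 1 := by
      rw [Finset.card_erase_of_mem (Finset.mem_of_mem_erase hv'), hScard]
    have hne : (S.erase v').Nonempty := by
      rw [← Finset.card_pos, hcardE]; omega
    obtain ⟨w, hw⟩ := hne
    have hwT : w ∈ (insert u (S.erase v') : Finset V) := Finset.mem_insert_of_mem hw
    have huT : u ∈ (insert u (S.erase v') : Finset V) := Finset.mem_insert_self _ _
    have hwu : w ≠ u := (hSavoid w (Finset.mem_of_mem_erase hw)).1
    obtain ⟨p⟩ := hconn.preconnected ⟨u, huT⟩ ⟨w, hwT⟩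
    cases p with
    | nil => exact hwu rfl
    | cons h q =>
      rename_i y
      have hy : G.Adj u y.val := by
        simpa only [SimpleGraph.comap_adj, Function.Embedding.coe_subtype] using h
      have : (y : V) ∈ (insert u (S.erase v') : Finset V) := by
        simpa using y.2
      rcases Finset.mem_insert.1 this with h' | h'
      · rw [h'] at hy; exact G.loopless.irrefl u hy
      · exact (hSavoid _ (Finset.mem_of_mem_erase h')).2 hy

lemma partition {G : SimpleGraph V} {u v : V} (huv : u ≠ v) (hnadj : ¬ G.Adj u v)
    (hcom : ∀ z, ¬ (G.Adj u z ∧ G.Adj v z)) :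
    ∀ {x y : V}, G.Walk x y →
      ((Hg G u).Reachable y v ∨ (Hg G v).Reachable y u) →
      (Hg G u).Reachable x v ∨ (Hg G v).Reachable x u := by
  have hvNu : v ≠ u ∧ ¬ G.Adj u v := ⟨Ne.symm huv, hnadj⟩
  have huNv : u ≠ v ∧ ¬ G.Adj v u := ⟨huv, fun h => hnadj h.symm⟩
  intro x y p
  induction p with
  | nil => exact id
  | @cons x y z h q ih0 =>
    intro hz
    have ih := ih0 hz
    by_cases hxv : x = v
    · exact Or.inl (by rw [hxv])
    by_cases hxu : x = u
    · exact Or.inr (by rw [hxu])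
    by_cases hxav : G.Adj v x
    · have hxNu : x ≠ u ∧ ¬ G.Adj u x := ⟨hxu, fun h' => hcom x ⟨h', hxav⟩⟩
      exact Or.inl (SimpleGraph.Adj.reachable (G := Hg G u) ⟨hxav.symm, hxNu, hvNu⟩)
    by_cases hxau : G.Adj u x
    · have hxNv : x ≠ v ∧ ¬ G.Adj v x := ⟨hxv, hxav⟩
      exact Or.inr (SimpleGraph.Adj.reachable (G := Hg G v) ⟨hxau.symm, hxNv, huNv⟩)
    have hxNu : x ≠ u ∧ ¬ G.Adj u x := ⟨hxu, hxau⟩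
    have hxNv : x ≠ v ∧ ¬ G.Adj v x := ⟨hxv, hxav⟩
    by_cases hyu : y = u
    · subst hyu
      exact Or.inr (SimpleGraph.Adj.reachable (G := Hg G v) ⟨h, hxNv, huNv⟩)
    by_cases hyau : G.Adj u y
    · have hyNv : y ≠ v ∧ ¬ G.Adj v y := ⟨fun h' => hnadj (h' ▸ hyau),
        fun h' => hcom y ⟨hyau, h'⟩⟩
      exact Or.inr (Reachable.trans
        (SimpleGraph.Adj.reachable (G := Hg G v) ⟨h, hxNv, hyNv⟩)
        (SimpleGraph.Adj.reachable (G := Hg G v) ⟨hyau.symm, hyNv, huNv⟩))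
    have hyNu : y ≠ u ∧ ¬ G.Adj u y := ⟨hyu, hyau⟩
    by_cases hyv : y = v
    · subst hyv
      exact Or.inl (SimpleGraph.Adj.reachable (G := Hg G u) ⟨h, hxNu, hvNu⟩)
    by_cases hyav : G.Adj v y
    · exact Or.inl (Reachable.trans
        (SimpleGraph.Adj.reachable (G := Hg G u) ⟨h, hxNu, hyNu⟩)
        (SimpleGraph.Adj.reachable (G := Hg G u) ⟨hyav.symm, hyNu, hvNu⟩))
    have hyNv : y ≠ v ∧ ¬ G.Adj v y := ⟨hyv, hyav⟩
    rcases ih with hl | hr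
    · exact Or.inl (Reachable.trans
        (SimpleGraph.Adj.reachable (G := Hg G u) ⟨h, hxNu, hyNu⟩) hl)
    · exact Or.inr (Reachable.trans
        (SimpleGraph.Adj.reachable (G := Hg G v) ⟨h, hxNv, hyNv⟩) hr)

end Stmt13Aux

theorem stmt13 {V : Type*} [Fintype V] [DecidableEq V] (k : ℕ) (hk : 2 ≤ k)
    (G : SimpleGraph V) (hconn : G.Connected)
    (hcard : 2 * k - 2 < Fintype.card V)
    (u v : V) (huv : u ≠ v) (hnadj : ¬ G.Adj u v)
    (hfake : ¬ ClearNonNeighbors k G u v) :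
    (G.neighborSet u ∩ G.neighborSet v).Nonempty := by
  classical
  by_contra hne
  have hcom : ∀ z, ¬ (G.Adj u z ∧ G.Adj v z) := by
    intro z hz
    exact hne ⟨z, hz.1, hz.2⟩
  have hcom' : ∀ z, ¬ (G.Adj v z ∧ G.Adj u z) := fun z hz => hcom z ⟨hz.2, hz.1⟩
  set Cv : Finset V := Finset.univ.filter (fun x => (Stmt13Aux.Hg G u).Reachable x v) with hCv
  set Cu : Finset V := Finset.univ.filter (fun x => (Stmt13Aux.Hg G v).Reachable x u) with hCu
  have hCvmem : ∀ x, x ∈ Cv ↔ (Stmt13Aux.Hg G u).Reachable x v := by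
    intro x; simp [hCv]
  have hCumem : ∀ x, x ∈ Cu ↔ (Stmt13Aux.Hg G v).Reachable x u := by
    intro x; simp [hCu]
  have hpart : ∀ x : V, x ∈ Cv ∨ x ∈ Cu := by
    intro x
    obtain ⟨p⟩ := hconn.preconnected x v
    rcases Stmt13Aux.partition huv hnadj hcom p (Or.inl (SimpleGraph.Reachable.refl v)) with h | h
    · exact Or.inl ((hCvmem x).2 h)
    · exact Or.inr ((hCumem x).2 h)
  have hsub : (Finset.univ : Finset V) ⊆ Cv ∪ Cu := by
    intro x _
    rcases hpart x with h | h
    · exact Finset.mem_union_left _ h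
    · exact Finset.mem_union_right _ h
  have hcards : Fintype.card V ≤ Cv.card + Cu.card := by
    calc Fintype.card V = (Finset.univ : Finset V).card := (Finset.card_univ).symm
      _ ≤ (Cv ∪ Cu).card := Finset.card_le_card hsub
      _ ≤ Cv.card + Cu.card := Finset.card_union_le _ _
  have : k ≤ Cv.card ∨ k ≤ Cu.card := by omega
  apply hfake
  rcases this with h | h
  · exact Or.inl (Stmt13Aux.oneSide G k hk huv hnadj Cv hCvmem h)
  · exact Or.inr (Stmt13Aux.oneSide G k hk (Ne.symm huv) (fun h' => hnadj h'.symm)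
      Cu hCumem h)
end

section
/- Let k ≥ 3 be an integer and let G be a finite simple graph with two distinct vertices u, v that are twins, i.e. N_G(u) \ {v} = N_G(v) \ {u}. Then the graph obtained from G by adding the edge uv and the graph obtained from G by deleting the edge uv have the same connected k-sets: S_k(G + uv) = S_k(G − uv). -/
lemma reach_transfer {W : Type*} {G H : SimpleGraph W}
    (h : ∀ a b, G.Adj a b → H.Reachable a b) :
    ∀ a b : W, G.Reachable a b → H.Reachable a b := by
  intro a b ⟨w⟩
  induction w with
  | nil => exact SimpleGraph.Reachable.refl _
  | cons hadj _ ih => exact (h _ _ hadj).trans ih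

theorem stmt15 {V : Type*} [Fintype V] [DecidableEq V] (k : ℕ) (hk : 3 ≤ k)
    (G : SimpleGraph V) (u v : V) (huv : u ≠ v)
    (htwin : G.neighborSet u \ {v} = G.neighborSet v \ {u}) :
    connSets k (G ⊔ SimpleGraph.fromEdgeSet {s(u, v)}) =
      connSets k (G.deleteEdges {s(u, v)}) := by
  classical
  set Gp := G ⊔ SimpleGraph.fromEdgeSet {s(u, v)} with hGp
  set Gm := G.deleteEdges {s(u, v)} with hGm
  -- adjacency characterizations
  have hGpAdj : ∀ a b : V, Gp.Adj a b ↔ (G.Adj a b ∨ (s(a, b) = s(u, v) ∧ a ≠ b)) := by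
    intro a b
    simp [hGp, SimpleGraph.fromEdgeSet_adj]
  have hGmAdj : ∀ a b : V, Gm.Adj a b ↔ (G.Adj a b ∧ s(a, b) ≠ s(u, v)) := by
    intro a b
    simp [hGm, SimpleGraph.deleteEdges_adj]
  -- twins as adjacency
  have htw : ∀ w : V, w ≠ u → w ≠ v → (G.Adj u w ↔ G.Adj v w) := by
    intro w hwu hwv
    constructor
    · intro h
      have : w ∈ G.neighborSet u \ {v} := ⟨h, by simp [hwv]⟩
      rw [htwin] at this
      exact this.1
    · intro h
      have : w ∈ G.neighborSet v \ {u} := ⟨h, by simp [hwu]⟩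
      rw [← htwin] at this
      exact this.1
  ext S
  simp only [connSets, Set.mem_setOf_eq]
  constructor
  · rintro ⟨hcard, hconn⟩
    refine ⟨hcard, ?_⟩
    have hne : Nonempty (S : Set V) := hconn.nonempty
    -- find a common neighbor when u, v ∈ S
    have key : u ∈ S → v ∈ S → ∃ w ∈ S, w ≠ u ∧ w ≠ v ∧ G.Adj u w ∧ G.Adj v w := by
      intro hu hv
      -- pick w0 ∈ S \ {u, v}
      have hw0 : ∃ w0 ∈ S, w0 ≠ u ∧ w0 ≠ v := by
        have hcard2 : ((S \ {u, v}) : Finset V).Nonempty := by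
          have : (({u, v} : Finset V)).card ≤ 2 := Finset.card_insert_le _ _ |>.trans (by simp)
          have h3 : 1 ≤ (S \ {u, v}).card := by
            have := Finset.le_card_sdiff ({u, v} : Finset V) S
            omega
          exact Finset.card_pos.mp (by omega)
        obtain ⟨w0, hw0⟩ := hcard2
        simp only [Finset.mem_sdiff, Finset.mem_insert, Finset.mem_singleton] at hw0
        exact ⟨w0, hw0.1, fun h => hw0.2 (Or.inl h), fun h => hw0.2 (Or.inr h)⟩
      obtain ⟨w0, hw0S, hw0u, hw0v⟩ := hw0
      have hr : (Gp.induce (S : Set V)).Reachable ⟨w0, by simpa using hw0S⟩ ⟨u, by simpa using hu⟩ :=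
        hconn.preconnected _ _
      obtain ⟨p⟩ := hr
      -- walk induction: first time the walk hits {u, v}
      have claim : ∀ (a t : (S : Set V)) (p : (Gp.induce (S : Set V)).Walk a t),
          (t : V) = u → (a : V) ≠ u → (a : V) ≠ v → ∃ w ∈ S, w ≠ u ∧ w ≠ v ∧ G.Adj u w ∧ G.Adj v w := by
        intro a t p
        induction p with
        | nil => intro ht h1 _; exact absurd ht h1
        | @cons a' b' _ hadj q ih =>
          intro ht ha1 ha2
          by_cases hb1 : (b' : V) = u
          · -- edge a'-b' is an edge of Gp with b' = u, a' ∉ {u, v}: it is a G-edge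
            have hadj' : Gp.Adj (a' : V) (b' : V) := hadj
            rw [hGpAdj] at hadj'
            have hGadj : G.Adj (a' : V) u := by
              rcases hadj' with h | ⟨h, _⟩
              · rwa [hb1] at h
              · rw [Sym2.eq_iff] at h
                rcases h with ⟨h1, _⟩ | ⟨h1, _⟩
                · exact absurd h1 ha1
                · exact absurd h1 ha2
            refine ⟨a', by simpa using a'.2, ha1, ha2, hGadj.symm, ?_⟩
            exact (htw _ ha1 ha2).mp hGadj.symm
          · by_cases hb2 : (b' : V) = v
            · have hadj' : Gp.Adj (a' : V) (b' : V) := hadj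
              rw [hGpAdj] at hadj'
              have hGadj : G.Adj (a' : V) v := by
                rcases hadj' with h | ⟨h, _⟩
                · rwa [hb2] at h
                · rw [Sym2.eq_iff] at h
                  rcases h with ⟨h1, _⟩ | ⟨h1, _⟩
                  · exact absurd h1 ha1
                  · exact absurd h1 ha2
              refine ⟨a', by simpa using a'.2, ha1, ha2, ?_, hGadj.symm⟩
              exact (htw _ ha1 ha2).mpr hGadj.symm
            · exact ih ht hb1 hb2
      exact claim _ _ p rfl hw0u hw0v
    haveI := hne
    refine SimpleGraph.Connected.mk ?_
    intro a b
    refine reach_transfer ?_ a b (hconn.preconnected a b)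
    intro x y hxy
    have hxy' : Gp.Adj (x : V) (y : V) := hxy
    rw [hGpAdj] at hxy'
    by_cases hcase : s((x : V), (y : V)) = s(u, v)
    · -- {x, y} = {u, v}: reroute through a common neighbor w
      rw [Sym2.eq_iff] at hcase
      have hxneqy : (x : V) ≠ (y : V) := by
        rcases hcase with ⟨h1, h2⟩ | ⟨h1, h2⟩ <;> rw [h1, h2] <;> [exact huv; exact huv.symm]
      have huS : u ∈ S ∧ v ∈ S := by
        rcases hcase with ⟨h1, h2⟩ | ⟨h1, h2⟩
        · exact ⟨by rw [← h1]; simpa using x.2, by rw [← h2]; simpa using y.2⟩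
        · exact ⟨by rw [← h2]; simpa using y.2, by rw [← h1]; simpa using x.2⟩
      obtain ⟨w, hwS, hwu, hwv, hadju, hadjv⟩ := key huS.1 huS.2
      -- u - w and w - v are edges of Gm
      have hsuw : s(u, w) ≠ s(u, v) := by
        intro h
        rw [Sym2.eq_iff] at h
        rcases h with ⟨_, h2⟩ | ⟨h1, _⟩
        · exact hwv h2
        · exact huv h1
      have hsvw : s(v, w) ≠ s(u, v) := by
        intro h
        rw [Sym2.eq_iff] at h
        rcases h with ⟨h1, _⟩ | ⟨_, h2⟩
        · exact huv h1.symm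
        · exact hwu h2
      have hwS' : (w : V) ∈ (S : Set V) := by simpa using hwS
      have huS' : (u : V) ∈ (S : Set V) := by simpa using huS.1
      have hvS' : (v : V) ∈ (S : Set V) := by simpa using huS.2
      have h1 : (Gm.induce (S : Set V)).Adj ⟨u, huS'⟩ ⟨w, hwS'⟩ := by
        show Gm.Adj u w
        rw [hGmAdj]; exact ⟨hadju, hsuw⟩
      have h2 : (Gm.induce (S : Set V)).Adj ⟨w, hwS'⟩ ⟨v, hvS'⟩ := by
        show Gm.Adj w v
        rw [hGmAdj]
        exact ⟨hadjv.symm, by rwa [Sym2.eq_swap]⟩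
      have hreach : (Gm.induce (S : Set V)).Reachable ⟨u, huS'⟩ ⟨v, hvS'⟩ :=
        h1.reachable.trans h2.reachable
      rcases hcase with ⟨h1', h2'⟩ | ⟨h1', h2'⟩
      · have hx : x = ⟨u, huS'⟩ := Subtype.ext h1'
        have hy : y = ⟨v, hvS'⟩ := Subtype.ext h2'
        rw [hx, hy]; exact hreach
      · have hx : x = ⟨v, hvS'⟩ := Subtype.ext h1'
        have hy : y = ⟨u, huS'⟩ := Subtype.ext h2'
        rw [hx, hy]; exact hreach.symm
    · -- not the uv edge: it's a G-edge surviving deletion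
      have hGadj : G.Adj (x : V) (y : V) := by
        rcases hxy' with h | ⟨h, _⟩
        · exact h
        · exact absurd h hcase
      have : (Gm.induce (S : Set V)).Adj x y := by
        show Gm.Adj (x : V) (y : V)
        rw [hGmAdj]; exact ⟨hGadj, hcase⟩
      exact this.reachable
  · rintro ⟨hcard, hconn⟩
    refine ⟨hcard, ?_⟩
    haveI := hconn.nonempty
    refine SimpleGraph.Connected.mk ?_
    intro a b
    refine reach_transfer ?_ a b (hconn.preconnected a b)
    intro x y hxy
    have hxy' : Gm.Adj (x : V) (y : V) := hxy
    rw [hGmAdj] at hxy'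
    have : (Gp.induce (S : Set V)).Adj x y := by
      show Gp.Adj (x : V) (y : V)
      rw [hGpAdj]
      exact Or.inl hxy'.1
    exact this.reachable
end
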